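/- arXiv:0707.3423 — 6 statements merged into one kernel-verified Lean document; each statement's English description precedes it below -/
import Mathlib

section
/- Let φ ∈ S(n,m) and ζ ∈ ∂B^n. If L = liminf_{z→ζ} (1 - |φ(z)|^2)/(1 - |z|^2) < ∞, then there exists ξ ∈ ∂B^m such that the function h(z) = (1 - ⟨φ(z), ξ⟩)/(1 - ⟨z, ζ⟩) belongs to H(φ), with ‖h‖_{H(φ)}^2 ≤ L. -/
open Metric Filter Topology
open scoped ComplexConjugate ComplexOrder

local notation "⟪" x ", " y "⟫" => @inner ℂ _ _ x y

/-- The Schur–Agler positivity condition for `φ : Bⁿ → Bᵐ`. -/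
def SchurAglerKernelPos {n m : ℕ}
    (φ : EuclideanSpace ℂ (Fin n) → EuclideanSpace ℂ (Fin m)) : Prop :=
  ∀ (N : ℕ) (zs : Fin N → EuclideanSpace ℂ (Fin n)),
    (∀ i, zs i ∈ ball (0 : EuclideanSpace ℂ (Fin n)) 1) →
    ∀ c : Fin N → ℂ,
      0 ≤ ∑ i, ∑ j, c i * conj (c j) *
        ((1 - ⟪φ (zs j), φ (zs i)⟫) / (1 - ⟪zs j, zs i⟫))

set_option maxHeartbeats 2000000 in
/-- Let `φ ∈ S(n,m)` and `ζ ∈ ∂Bⁿ`.  If condition (C) holds, i.e.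
`L = liminf_{z→ζ} (1-‖φ(z)‖²)/(1-‖z‖²) < ∞` (finiteness being expressed by the ratio
being frequently bounded near `ζ`), then there exists `ξ ∈ ∂Bᵐ` such that
`h(z) = (1 - ⟨φ(z), ξ⟩)/(1 - ⟨z, ζ⟩)` belongs to `H(φ)`, with `‖h‖²_{H(φ)} ≤ L`. -/
theorem schur_agler_conditionC_gives_h_mem
    (n m : ℕ)
    (φ : EuclideanSpace ℂ (Fin n) → EuclideanSpace ℂ (Fin m))
    (hφmap : ∀ z ∈ ball (0 : EuclideanSpace ℂ (Fin n)) 1,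
      φ z ∈ ball (0 : EuclideanSpace ℂ (Fin m)) 1)
    (hφhol : DifferentiableOn ℂ φ (ball (0 : EuclideanSpace ℂ (Fin n)) 1))
    (hpsd : SchurAglerKernelPos φ)
    (ζ : EuclideanSpace ℂ (Fin n)) (hζ : ‖ζ‖ = 1)
    (Hφ : Type*) [NormedAddCommGroup Hφ] [InnerProductSpace ℂ Hφ] [CompleteSpace Hφ]
    (toFunφ : Hφ →ₗ[ℂ] (EuclideanSpace ℂ (Fin n) → ℂ))
    (hinjφ : Function.Injective toFunφ)
    (Kφ : EuclideanSpace ℂ (Fin n) → Hφ)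
    (hreproφ : ∀ (f : Hφ) (z : EuclideanSpace ℂ (Fin n)),
      z ∈ ball (0 : EuclideanSpace ℂ (Fin n)) 1 → toFunφ f z = ⟪Kφ z, f⟫)
    (hkerφ : ∀ z w : EuclideanSpace ℂ (Fin n),
      z ∈ ball (0 : EuclideanSpace ℂ (Fin n)) 1 →
      w ∈ ball (0 : EuclideanSpace ℂ (Fin n)) 1 →
      toFunφ (Kφ w) z = (1 - ⟪φ w, φ z⟫) / (1 - ⟪w, z⟫))
    (hdense : Dense (Submodule.span ℂ (Kφ '' (ball (0 : EuclideanSpace ℂ (Fin n)) 1)) : Set Hφ))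
    (L : ℝ)
    (hfin : ∃ C : ℝ, ∃ᶠ z in 𝓝[ball (0 : EuclideanSpace ℂ (Fin n)) 1] ζ,
      (1 - ‖φ z‖ ^ 2) / (1 - ‖z‖ ^ 2) ≤ C)
    (hL : Filter.liminf (fun z => (1 - ‖φ z‖ ^ 2) / (1 - ‖z‖ ^ 2))
      (𝓝[ball (0 : EuclideanSpace ℂ (Fin n)) 1] ζ) = L) :
    ∃ ξ : EuclideanSpace ℂ (Fin m), ‖ξ‖ = 1 ∧
      ∃ h : Hφ,
        (∀ z ∈ ball (0 : EuclideanSpace ℂ (Fin n)) 1,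
          toFunφ h z = (1 - ⟪ξ, φ z⟫) / (1 - ⟪ζ, z⟫)) ∧
        ‖h‖ ^ 2 ≤ L := by
    classical
  set B : Set (EuclideanSpace ℂ (Fin n)) := ball (0 : EuclideanSpace ℂ (Fin n)) 1 with hB
  set f : EuclideanSpace ℂ (Fin n) → ℝ := fun z => (1 - ‖φ z‖ ^ 2) / (1 - ‖z‖ ^ 2) with hfdef
  set F : Filter (EuclideanSpace ℂ (Fin n)) := 𝓝[B] ζ with hFdef
  have hden : ∀ z : EuclideanSpace ℂ (Fin n), z ∈ B → (0:ℝ) < 1 - ‖z‖ ^ 2 := by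
    intro z hz
    rw [hB, mem_ball_zero_iff] at hz
    nlinarith [norm_nonneg z]
  have hfpos : ∀ z ∈ B, (0:ℝ) ≤ f z := by
    intro z hz
    have h1 := hden z hz
    have h2 : ‖φ z‖ < 1 := by
      have := hφmap z hz; rwa [mem_ball_zero_iff] at this
    have h3 : (0:ℝ) ≤ 1 - ‖φ z‖ ^ 2 := by nlinarith [norm_nonneg (φ z)]
    exact div_nonneg h3 h1.le
  have hFne : F.NeBot := by
    rw [hFdef, ← mem_closure_iff_nhdsWithin_neBot, hB,
      closure_ball (0 : EuclideanSpace ℂ (Fin n)) one_ne_zero, mem_closedBall_zero_iff, hζ]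
  have hevB : ∀ᶠ z in F, z ∈ B := eventually_mem_nhdsWithin
  have hev0 : ∀ᶠ z in F, (0:ℝ) ≤ f z := hevB.mono hfpos
  have hbdd : F.IsBoundedUnder (· ≥ ·) f := ⟨0, by simpa [Filter.eventually_map] using hev0⟩
  obtain ⟨C, hC⟩ := hfin
  have hcob : F.IsCoboundedUnder (· ≥ ·) f := Filter.IsCoboundedUnder.of_frequently_le hC
  have hL0 : (0:ℝ) ≤ L := by
    rw [← hL]; exact Filter.le_liminf_of_le hcob hev0
  have key : ∀ ε : ℝ, 0 < ε → ∃ᶠ z in F, |f z - L| < ε := by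
    intro ε hε
    have h1 : ∀ᶠ z in F, L - ε < f z :=
      Filter.eventually_lt_of_lt_liminf (by rw [hL]; linarith) hbdd
    have h2 : ∃ᶠ z in F, f z < L + ε :=
      Filter.frequently_lt_of_liminf_lt hcob (by rw [hL]; linarith)
    refine (h2.and_eventually h1).mono ?_
    rintro zv ⟨ha, hb⟩
    rw [abs_lt]; constructor <;> linarith
  set G : Filter (EuclideanSpace ℂ (Fin n)) := F ⊓ Filter.comap f (𝓝 L) with hGdef
  have hGne : G.NeBot := by
    rw [hGdef, Filter.inf_neBot_iff]
    intro s hs t ht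
    obtain ⟨u, hu, hut⟩ := ht
    obtain ⟨ε, hε, hball⟩ := Metric.mem_nhds_iff.1 hu
    have h3 : ∃ᶠ zv in F, |f zv - L| < ε ∧ zv ∈ s := (key ε hε).and_eventually hs
    obtain ⟨zv, hzd, hzs⟩ := h3.exists
    refine ⟨zv, hzs, hut ?_⟩
    exact hball (by rwa [Metric.mem_ball, Real.dist_eq])
  obtain ⟨z0, hz0⟩ := Filter.exists_seq_tendsto G
  have hz0F : Filter.Tendsto z0 atTop F := hz0.mono_right inf_le_left
  have hz0f : Filter.Tendsto (fun k => f (z0 k)) atTop (𝓝 L) :=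
    Filter.tendsto_comap_iff.1 (hz0.mono_right inf_le_right)
  have hz0ball : ∀ᶠ k in atTop, z0 k ∈ B := hz0F.eventually hevB
  obtain ⟨N, hN⟩ := Filter.eventually_atTop.1 hz0ball
  set w : ℕ → EuclideanSpace ℂ (Fin n) := fun k => z0 (k + N) with hwdef
  have hwball : ∀ k, w k ∈ B := fun k => hN (k + N) (Nat.le_add_left _ _)
  have hshift : Filter.Tendsto (fun k : ℕ => k + N) atTop atTop := tendsto_add_atTop_nat N
  have hwζ : Filter.Tendsto w atTop (𝓝 ζ) :=
    (hz0F.mono_right nhdsWithin_le_nhds).comp hshift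
  have hwf : Filter.Tendsto (fun k => f (w k)) atTop (𝓝 L) := hz0f.comp hshift
  have hwn : Filter.Tendsto (fun k => ‖w k‖) atTop (𝓝 1) := by
    have := hwζ.norm; rwa [hζ] at this
  have hwd : Filter.Tendsto (fun k => 1 - ‖w k‖ ^ 2) atTop (𝓝 0) := by
    have h := (tendsto_const_nhds (x := (1:ℝ)) (f := atTop)).sub (hwn.pow 2)
    simpa using h
  have hwnum : Filter.Tendsto (fun k => 1 - ‖φ (w k)‖ ^ 2) atTop (𝓝 0) := by
    have h := hwf.mul hwd
    rw [mul_zero] at h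
    refine h.congr fun k => ?_
    exact div_mul_cancel₀ _ (hden _ (hwball k)).ne'
  have hwφn : Filter.Tendsto (fun k => ‖φ (w k)‖) atTop (𝓝 1) := by
    have h1 : Filter.Tendsto (fun k => ‖φ (w k)‖ ^ 2) atTop (𝓝 1) := by
      have h := (tendsto_const_nhds (x := (1:ℝ)) (f := atTop)).sub hwnum
      simpa using h
    have h2 := (Real.continuous_sqrt.tendsto 1).comp h1
    rw [Real.sqrt_one] at h2
    refine h2.congr fun k => ?_
    simp only [Function.comp_apply]
    exact Real.sqrt_sq (norm_nonneg _)
  obtain ⟨ξ, hξmem, ψ, hψ, hψt⟩ :=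
    (isCompact_closedBall (0 : EuclideanSpace ℂ (Fin m)) 1).tendsto_subseq
      (x := fun k => φ (w k)) (fun k => ball_subset_closedBall (hφmap _ (hwball k)))
  have hξ1 : ‖ξ‖ = 1 := by
    have h1 : Filter.Tendsto (fun k => ‖φ (w (ψ k))‖) atTop (𝓝 1) :=
      hwφn.comp hψ.tendsto_atTop
    have h2 : Filter.Tendsto (fun k => ‖φ (w (ψ k))‖) atTop (𝓝 ‖ξ‖) := hψt.norm
    exact tendsto_nhds_unique h2 h1
  set x : ℕ → EuclideanSpace ℂ (Fin n) := fun k => w (ψ k) with hxdef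
  have hxball : ∀ k, x k ∈ B := fun k => hwball _
  have hxζ : Filter.Tendsto x atTop (𝓝 ζ) := hwζ.comp hψ.tendsto_atTop
  have hxf : Filter.Tendsto (fun k => f (x k)) atTop (𝓝 L) := hwf.comp hψ.tendsto_atTop
  have hxφ : Filter.Tendsto (fun k => φ (x k)) atTop (𝓝 ξ) := hψt
  have hKnorm : ∀ v ∈ B, ‖Kφ v‖ ^ 2 = f v := by
    intro v hv
    have h1 : (⟪Kφ v, Kφ v⟫ : ℂ) = (1 - ⟪φ v, φ v⟫) / (1 - ⟪v, v⟫) := by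
      rw [← hreproφ (Kφ v) v hv]; exact hkerφ v v hv hv
    simp only [inner_self_eq_norm_sq_to_K] at h1
    have h2 : ((‖Kφ v‖ ^ 2 : ℝ) : ℂ) = (((1 - ‖φ v‖ ^ 2) / (1 - ‖v‖ ^ 2) : ℝ) : ℂ) := by
      push_cast
      exact h1
    exact_mod_cast h2
  have hKlim : Filter.Tendsto (fun k => ‖Kφ (x k)‖) atTop (𝓝 (Real.sqrt L)) := by
    have h1 := (Real.continuous_sqrt.tendsto L).comp hxf
    refine h1.congr fun k => ?_
    simp only [Function.comp_apply]
    rw [← hKnorm _ (hxball k), Real.sqrt_sq (norm_nonneg _)]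
  obtain ⟨M, hM⟩ : ∃ M : ℝ, ∀ k, ‖Kφ (x k)‖ ≤ M := by
    obtain ⟨M, hM⟩ := hKlim.bddAbove_range
    exact ⟨M, fun k => hM (Set.mem_range_self k)⟩
  have hIB : ∀ (u : Hφ) (k : ℕ), ‖(⟪Kφ (x k), u⟫ : ℂ)‖ ≤ M * ‖u‖ := fun u k =>
    le_trans (norm_inner_le_norm _ _) (mul_le_mul_of_nonneg_right (hM k) (norm_nonneg u))
  have hPK : ∀ v ∈ B, Filter.Tendsto (fun k => (⟪Kφ (x k), Kφ v⟫ : ℂ)) atTop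
      (𝓝 ((1 - ⟪φ v, ξ⟫) / (1 - ⟪v, ζ⟫))) := by
    intro v hv
    have heq : ∀ k, (⟪Kφ (x k), Kφ v⟫ : ℂ) = (1 - ⟪φ v, φ (x k)⟫) / (1 - ⟪v, x k⟫) := by
      intro k
      rw [← hreproφ (Kφ v) (x k) (hxball k)]
      exact hkerφ (x k) v (hxball k) hv
    have hnum : Filter.Tendsto (fun k => (1:ℂ) - ⟪φ v, φ (x k)⟫) atTop
        (𝓝 (1 - ⟪φ v, ξ⟫)) := tendsto_const_nhds.sub (tendsto_const_nhds.inner hxφ)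
    have hden2 : Filter.Tendsto (fun k => (1:ℂ) - ⟪v, x k⟫) atTop
        (𝓝 (1 - ⟪v, ζ⟫)) := tendsto_const_nhds.sub (tendsto_const_nhds.inner hxζ)
    have hne : (1:ℂ) - ⟪v, ζ⟫ ≠ 0 := by
      intro hcon
      have heq1 : (⟪v, ζ⟫ : ℂ) = 1 := by linear_combination -hcon
      have h4 : ‖(⟪v, ζ⟫ : ℂ)‖ ≤ ‖v‖ * ‖ζ‖ := norm_inner_le_norm _ _
      rw [heq1, hζ, mul_one] at h4
      have hv1 : ‖v‖ < 1 := mem_ball_zero_iff.1 hv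
      rw [norm_one] at h4
      linarith
    exact ((hnum.div hden2 hne).congr fun k => (heq k).symm)
  have hPspan : ∀ u ∈ Submodule.span ℂ (Kφ '' B),
      ∃ c : ℂ, Filter.Tendsto (fun k => (⟪Kφ (x k), u⟫ : ℂ)) atTop (𝓝 c) := by
    intro u hu
    refine Submodule.span_induction ?_ ?_ ?_ ?_ hu
    · rintro _ ⟨v, hv, rfl⟩
      exact ⟨_, hPK v hv⟩
    · exact ⟨0, by simpa using (tendsto_const_nhds : Filter.Tendsto (fun _ : ℕ => (0:ℂ)) atTop _)⟩
    · rintro u1 u2 _ _ ⟨c1, h1⟩ ⟨c2, h2⟩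
      exact ⟨c1 + c2, by simpa [inner_add_right] using h1.add h2⟩
    · rintro a u1 _ ⟨c1, h1⟩
      exact ⟨a * c1, by simpa [inner_smul_right] using h1.const_mul a⟩
  have hCauchy : ∀ u : Hφ, CauchySeq (fun k => (⟪Kφ (x k), u⟫ : ℂ)) := by
    intro u
    rw [Metric.cauchySeq_iff]
    intro ε hε
    have hM1 : (0:ℝ) < M + 1 := by
      have := (norm_nonneg (Kφ (x 0))).trans (hM 0); linarith
    have hucl : u ∈ closure (Submodule.span ℂ (Kφ '' B) : Set Hφ) := hdense u
    obtain ⟨v, hv, hvd⟩ := Metric.mem_closure_iff.1 hucl (ε / (3 * (M + 1))) (by positivity)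
    obtain ⟨c, hc⟩ := hPspan v hv
    obtain ⟨N1, hN1⟩ := Metric.cauchySeq_iff.1 hc.cauchySeq (ε / 3) (by linarith)
    refine ⟨N1, fun p hp q hq => ?_⟩
    have key1 : ∀ r : ℕ, ‖(⟪Kφ (x r), u⟫ : ℂ) - ⟪Kφ (x r), v⟫‖ < ε / 3 := by
      intro r
      rw [← inner_sub_right]
      have h5 : ‖u - v‖ < ε / (3 * (M + 1)) := by rw [← dist_eq_norm]; exact hvd
      calc ‖(⟪Kφ (x r), u - v⟫ : ℂ)‖ ≤ M * ‖u - v‖ := hIB _ _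
        _ ≤ (M + 1) * ‖u - v‖ := by nlinarith [norm_nonneg (u - v)]
        _ < (M + 1) * (ε / (3 * (M + 1))) := mul_lt_mul_of_pos_left h5 hM1
        _ = ε / 3 := by field_simp
    have h2 := hN1 p hp q hq
    rw [dist_eq_norm] at h2 ⊢
    have hdecomp : (⟪Kφ (x p), u⟫ : ℂ) - ⟪Kφ (x q), u⟫ =
        ((⟪Kφ (x p), u⟫ : ℂ) - ⟪Kφ (x p), v⟫) + ((⟪Kφ (x p), v⟫ : ℂ) - ⟪Kφ (x q), v⟫)
          + ((⟪Kφ (x q), v⟫ : ℂ) - ⟪Kφ (x q), u⟫) := by ring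
    rw [hdecomp]
    calc ‖((⟪Kφ (x p), u⟫ : ℂ) - ⟪Kφ (x p), v⟫) + ((⟪Kφ (x p), v⟫ : ℂ) - ⟪Kφ (x q), v⟫)
          + ((⟪Kφ (x q), v⟫ : ℂ) - ⟪Kφ (x q), u⟫)‖
        ≤ ‖(⟪Kφ (x p), u⟫ : ℂ) - ⟪Kφ (x p), v⟫‖ + ‖(⟪Kφ (x p), v⟫ : ℂ) - ⟪Kφ (x q), v⟫‖
          + ‖(⟪Kφ (x q), v⟫ : ℂ) - ⟪Kφ (x q), u⟫‖ := norm_add₃_le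
      _ < ε / 3 + ε / 3 + ε / 3 := by
          refine add_lt_add (add_lt_add (key1 p) h2) ?_
          rw [norm_sub_rev]; exact key1 q
      _ = ε := by ring
  have hlim : ∀ u : Hφ, ∃ c : ℂ, Filter.Tendsto (fun k => (⟪Kφ (x k), u⟫ : ℂ)) atTop (𝓝 c) :=
    fun u => cauchySeq_tendsto_of_complete (hCauchy u)
  choose T hT using hlim
  have hTadd : ∀ u v : Hφ, T (u + v) = T u + T v := fun u v =>
    tendsto_nhds_unique (hT (u + v))
      (((hT u).add (hT v)).congr fun k => (inner_add_right _ _ _).symm)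
  have hTsmul : ∀ (a : ℂ) (u : Hφ), T (a • u) = a * T u := fun a u =>
    tendsto_nhds_unique (hT (a • u))
      (((hT u).const_mul a).congr fun k => (inner_smul_right _ _ _).symm)
  have hTbound : ∀ u : Hφ, ‖T u‖ ≤ M * ‖u‖ := fun u =>
    le_of_tendsto (hT u).norm (Filter.Eventually.of_forall fun k => hIB u k)
  set Tlin : Hφ →ₗ[ℂ] ℂ :=
    { toFun := T, map_add' := hTadd, map_smul' := hTsmul } with hTlindef
  set Tc : Hφ →L[ℂ] ℂ := Tlin.mkContinuous M (fun u => hTbound u) with hTcdef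
  set h : Hφ := (InnerProductSpace.toDual ℂ Hφ).symm Tc with hhdef
  have hinner : ∀ u : Hφ, (⟪h, u⟫ : ℂ) = T u := by
    intro u
    rw [hhdef]
    rw [InnerProductSpace.toDual_symm_apply]
    rfl
  refine ⟨ξ, hξ1, h, ?_, ?_⟩
  · intro v hv
    have h1 : T (Kφ v) = (1 - ⟪φ v, ξ⟫) / (1 - ⟪v, ζ⟫) :=
      tendsto_nhds_unique (hT (Kφ v)) (hPK v hv)
    rw [hreproφ h v hv, ← inner_conj_symm (Kφ v) h, hinner, h1]
    simp only [map_div₀, map_sub, map_one, inner_conj_symm]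
  · have hTh : (⟪h, h⟫ : ℂ) = T h := hinner h
    have ha : Filter.Tendsto (fun k => ‖(⟪Kφ (x k), h⟫ : ℂ)‖) atTop (𝓝 (‖h‖ ^ 2)) := by
      have h2 := (hT h).norm
      have h3 : ‖T h‖ = ‖h‖ ^ 2 := by
        rw [← hTh, inner_self_eq_norm_sq_to_K]
        simp [norm_pow]
      rwa [h3] at h2
    have hb : Filter.Tendsto (fun k => ‖Kφ (x k)‖ * ‖h‖) atTop (𝓝 (Real.sqrt L * ‖h‖)) :=
      hKlim.mul_const _
    have hle : ‖h‖ ^ 2 ≤ Real.sqrt L * ‖h‖ :=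
      le_of_tendsto_of_tendsto' ha hb fun k => norm_inner_le_norm _ _
    nlinarith [Real.sq_sqrt hL0, Real.sqrt_nonneg L, norm_nonneg h,
      sq_nonneg (‖h‖ - Real.sqrt L)]
end

section
/- Let φ ∈ S(n,m), ζ ∈ ∂B^n, ξ ∈ ∂B^m, and suppose h = k^φ_ζ := (1 - ⟨φ(·), ξ⟩)/(1 - ⟨·, ζ⟩) belongs to H(φ). Then the norms ‖k^φ_z‖_{H(φ)} remain bounded as z → ζ within any Koranyi region D_α(ζ), and consequently k^φ_z → k^φ_ζ weakly in H(φ) and every f ∈ H(φ) has a finite K-limit at ζ, namely ⟨f, k^φ_ζ⟩. -/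
open Metric Filter Topology
open scoped ComplexConjugate ComplexOrder

local notation "⟪" x ", " y "⟫" => @inner ℂ _ _ x y

/-- The Koranyi region `D_α(ζ) = {z ∈ Bⁿ : |1 - ⟨z,ζ⟩| ≤ (α/2)(1-‖z‖²)}`. -/
def Koranyi {n : ℕ} (α : ℝ) (ζ : EuclideanSpace ℂ (Fin n)) :
    Set (EuclideanSpace ℂ (Fin n)) :=
  {z | z ∈ ball (0 : EuclideanSpace ℂ (Fin n)) 1 ∧
    ‖1 - ⟪ζ, z⟫‖ ≤ α / 2 * (1 - ‖z‖ ^ 2)}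

set_option maxHeartbeats 1000000 in
/-- Let `φ ∈ S(n,m)`, `ζ ∈ ∂Bⁿ`, `ξ ∈ ∂Bᵐ`, and suppose
`k^φ_ζ = (1 - ⟨φ(·), ξ⟩)/(1 - ⟨·, ζ⟩)` belongs to `H(φ)`.  Then the norms `‖k^φ_z‖`
remain bounded as `z → ζ` within any Koranyi region `D_α(ζ)`, and consequently
`k^φ_z → k^φ_ζ` weakly: every `f ∈ H(φ)` has finite K-limit `⟨f, k^φ_ζ⟩` at `ζ`
(i.e. `f(z) = ⟨f, k^φ_z⟩ → ⟨f, k^φ_ζ⟩` within each Koranyi region). -/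
theorem schur_agler_kernel_norms_bounded_and_K_limits
    (n m : ℕ)
    (φ : EuclideanSpace ℂ (Fin n) → EuclideanSpace ℂ (Fin m))
    (hφmap : ∀ z ∈ ball (0 : EuclideanSpace ℂ (Fin n)) 1,
      φ z ∈ ball (0 : EuclideanSpace ℂ (Fin m)) 1)
    (hφhol : DifferentiableOn ℂ φ (ball (0 : EuclideanSpace ℂ (Fin n)) 1))
    (hpsd : SchurAglerKernelPos φ)
    (ζ : EuclideanSpace ℂ (Fin n)) (hζ : ‖ζ‖ = 1)
    (ξ : EuclideanSpace ℂ (Fin m)) (hξ : ‖ξ‖ = 1)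
    (Hφ : Type*) [NormedAddCommGroup Hφ] [InnerProductSpace ℂ Hφ] [CompleteSpace Hφ]
    (toFunφ : Hφ →ₗ[ℂ] (EuclideanSpace ℂ (Fin n) → ℂ))
    (hinjφ : Function.Injective toFunφ)
    (Kφ : EuclideanSpace ℂ (Fin n) → Hφ)
    (hreproφ : ∀ (f : Hφ) (z : EuclideanSpace ℂ (Fin n)),
      z ∈ ball (0 : EuclideanSpace ℂ (Fin n)) 1 → toFunφ f z = ⟪Kφ z, f⟫)
    (hkerφ : ∀ z w : EuclideanSpace ℂ (Fin n),
      z ∈ ball (0 : EuclideanSpace ℂ (Fin n)) 1 →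
      w ∈ ball (0 : EuclideanSpace ℂ (Fin n)) 1 →
      toFunφ (Kφ w) z = (1 - ⟪φ w, φ z⟫) / (1 - ⟪w, z⟫))
    (hdense : Dense (Submodule.span ℂ (Kφ '' (ball (0 : EuclideanSpace ℂ (Fin n)) 1)) : Set Hφ))
    (h : Hφ)
    (hh : ∀ z ∈ ball (0 : EuclideanSpace ℂ (Fin n)) 1,
      toFunφ h z = (1 - ⟪ξ, φ z⟫) / (1 - ⟪ζ, z⟫)) :
    (∀ α > (0 : ℝ), ∃ C : ℝ, ∃ δ > (0 : ℝ), ∀ z ∈ Koranyi α ζ, ‖z - ζ‖ < δ → ‖Kφ z‖ ≤ C) ∧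
    (∀ f : Hφ, ∀ α > (0 : ℝ),
      Tendsto (fun z => toFunφ f z) (𝓝[Koranyi α ζ] ζ) (𝓝 ⟪h, f⟫)) := by
  -- Notation
  set B := ball (0 : EuclideanSpace ℂ (Fin n)) 1 with hB
  -- the denominator 1 - ⟪w, z⟫ is nonzero when one vector is in the ball and
  -- the other has norm at most 1
  have hden_ne : ∀ (w z : EuclideanSpace ℂ (Fin n)), ‖w‖ < 1 → ‖z‖ ≤ 1 →
      (1 : ℂ) - ⟪w, z⟫ ≠ 0 := by
    intro w z hw hz hc
    have h1 : (⟪w, z⟫ : ℂ) = 1 := by linear_combination -hc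
    have h2 : ‖(⟪w, z⟫ : ℂ)‖ ≤ ‖w‖ * ‖z‖ := norm_inner_le_norm w z
    rw [h1] at h2
    simp only [norm_one] at h2
    nlinarith [norm_nonneg w, norm_nonneg z]
  -- the square of the kernel norm
  have hKnorm : ∀ z ∈ B, ‖Kφ z‖ ^ 2 * (1 - ‖z‖ ^ 2) = 1 - ‖φ z‖ ^ 2 := by
    intro z hz
    have hzlt : ‖z‖ < 1 := mem_ball_zero_iff.mp hz
    have hφlt : ‖φ z‖ < 1 := mem_ball_zero_iff.mp (hφmap z hz)
    have h1 : (⟪Kφ z, Kφ z⟫ : ℂ) = (1 - ⟪φ z, φ z⟫) / (1 - ⟪z, z⟫) := by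
      rw [← hreproφ (Kφ z) z hz, hkerφ z z hz hz]
    rw [inner_self_eq_norm_sq_to_K, inner_self_eq_norm_sq_to_K,
      inner_self_eq_norm_sq_to_K] at h1
    have hden : (1 : ℂ) - (‖z‖ : ℂ) ^ 2 ≠ 0 := by
      intro hc
      have : ((1 - ‖z‖ ^ 2 : ℝ) : ℂ) = 0 := by push_cast; linear_combination hc
      rw [Complex.ofReal_eq_zero] at this
      nlinarith [norm_nonneg z]
    field_simp [hden] at h1
    exact Complex.ofReal_injective (by push_cast at h1 ⊢; exact h1)
  -- the key boundedness estimate on Koranyi regions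
  have hbound : ∀ α : ℝ, 0 < α → ∀ z ∈ Koranyi α ζ, ‖Kφ z‖ ≤ α * ‖h‖ := by
    intro α hα z hzK
    obtain ⟨hzB, hzKor⟩ := hzK
    have hzlt : ‖z‖ < 1 := mem_ball_zero_iff.mp hzB
    have hφlt : ‖φ z‖ < 1 := mem_ball_zero_iff.mp (hφmap z hzB)
    -- Cauchy–Schwarz
    have hCS : ‖toFunφ h z‖ ≤ ‖Kφ z‖ * ‖h‖ := by
      rw [hreproφ h z hzB]; exact norm_inner_le_norm _ _
    -- numerator estimate : 1 - ‖φ z‖² ≤ 2 ‖1 - ⟪ξ, φ z⟫‖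
    have hφξ : ‖(⟪ξ, φ z⟫ : ℂ)‖ ≤ ‖φ z‖ := by
      have := norm_inner_le_norm (𝕜 := ℂ) ξ (φ z)
      rwa [hξ, one_mul] at this
    have hnum : 1 - ‖φ z‖ ^ 2 ≤ 2 * ‖(1 : ℂ) - ⟪ξ, φ z⟫‖ := by
      have h3 : ‖(1 : ℂ)‖ - ‖(⟪ξ, φ z⟫ : ℂ)‖ ≤ ‖(1 : ℂ) - ⟪ξ, φ z⟫‖ :=
        norm_sub_norm_le _ _
      rw [norm_one] at h3
      nlinarith [norm_nonneg (φ z), sq_nonneg (1 - ‖φ z‖)]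
    -- relate 1 - ⟪ξ, φ z⟫ to h and the Koranyi denominator
    have hdζ : (1 : ℂ) - ⟪ζ, z⟫ ≠ 0 := by
      intro hc
      have h1 : (⟪ζ, z⟫ : ℂ) = 1 := by linear_combination -hc
      have h2 := norm_inner_le_norm (𝕜 := ℂ) ζ z
      rw [h1, hζ, one_mul] at h2
      simp only [norm_one] at h2
      linarith
    have hfac : (1 : ℂ) - ⟪ξ, φ z⟫ = toFunφ h z * (1 - ⟪ζ, z⟫) := by
      rw [hh z hzB, div_mul_cancel₀ _ hdζ]
    have habs : ‖(1 : ℂ) - ⟪ξ, φ z⟫‖ = ‖toFunφ h z‖ * ‖(1 : ℂ) - ⟪ζ, z⟫‖ := by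
      rw [hfac, norm_mul]
    have hKor' : ‖(1 : ℂ) - ⟪ζ, z⟫‖ ≤ α / 2 * (1 - ‖z‖ ^ 2) := by
      exact hzKor
    have hpos : (0 : ℝ) < 1 - ‖z‖ ^ 2 := by nlinarith [norm_nonneg z]
    have hKsq := hKnorm z hzB
    have hchain : ‖Kφ z‖ ^ 2 * (1 - ‖z‖ ^ 2) ≤
        α * ‖h‖ * ‖Kφ z‖ * (1 - ‖z‖ ^ 2) := by
      calc ‖Kφ z‖ ^ 2 * (1 - ‖z‖ ^ 2) = 1 - ‖φ z‖ ^ 2 := hKsq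
        _ ≤ 2 * ‖(1 : ℂ) - ⟪ξ, φ z⟫‖ := hnum
        _ = 2 * (‖toFunφ h z‖ * ‖(1 : ℂ) - ⟪ζ, z⟫‖) := by rw [habs]
        _ ≤ 2 * ((‖Kφ z‖ * ‖h‖) * (α / 2 * (1 - ‖z‖ ^ 2))) := by
            apply mul_le_mul_of_nonneg_left _ (by norm_num)
            exact mul_le_mul hCS hKor' (norm_nonneg _)
              (by positivity)
        _ = α * ‖h‖ * ‖Kφ z‖ * (1 - ‖z‖ ^ 2) := by ring
    have hsq : ‖Kφ z‖ ^ 2 ≤ α * ‖h‖ * ‖Kφ z‖ :=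
      le_of_mul_le_mul_right (by linarith [hchain]) hpos
    rcases eq_or_lt_of_le (norm_nonneg (Kφ z)) with h0 | h0
    · rw [← h0]; positivity
    · have h3 : ‖Kφ z‖ * ‖Kφ z‖ ≤ α * ‖h‖ * ‖Kφ z‖ := by nlinarith [hsq]
      exact le_of_mul_le_mul_right h3 h0
  constructor
  · intro α hα
    exact ⟨α * ‖h‖, 1, one_pos, fun z hz _ => hbound α hα z hz⟩
  -- Part 2 : K-limits
  · intro f α hα
    set L := 𝓝[Koranyi α ζ] ζ with hL
    have hev : ∀ᶠ z in L, z ∈ Koranyi α ζ := self_mem_nhdsWithin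
    have hevB : ∀ᶠ z in L, z ∈ B := hev.mono fun z hz => hz.1
    have hevbd : ∀ᶠ z in L, ‖Kφ z‖ ≤ α * ‖h‖ := hev.mono fun z hz => hbound α hα z hz
    -- z → ζ along L
    have hid : Tendsto (fun z : EuclideanSpace ℂ (Fin n) => z) L (𝓝 ζ) :=
      tendsto_id.mono_left nhdsWithin_le_nhds
    -- ⟪ζ, z⟫ → 1
    have hζz : Tendsto (fun z => (⟪ζ, z⟫ : ℂ)) L (𝓝 1) := by
      have hc : Continuous fun z : EuclideanSpace ℂ (Fin n) => (⟪ζ, z⟫ : ℂ) :=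
        continuous_const.inner continuous_id
      have := (hc.tendsto ζ).comp hid
      simpa [inner_self_eq_norm_sq_to_K, hζ, Function.comp_def] using this
    -- 1 - ‖z‖² → 0
    have hnz : Tendsto (fun z : EuclideanSpace ℂ (Fin n) => 1 - ‖z‖ ^ 2) L (𝓝 0) := by
      have hc : Continuous fun z : EuclideanSpace ℂ (Fin n) => 1 - ‖z‖ ^ 2 :=
        continuous_const.sub (continuous_norm.pow 2)
      have := (hc.tendsto ζ).comp hid
      simpa [hζ, Function.comp_def] using this
    -- ‖φ z‖² → 1
    have hφn0 : Tendsto (fun z => 1 - ‖φ z‖ ^ 2) L (𝓝 0) := by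
      apply squeeze_zero'
      · refine hevB.mono fun z hz => ?_
        have h1 := mem_ball_zero_iff.mp (hφmap z hz)
        have h2 : (0:ℝ) ≤ (1 - ‖φ z‖) * (1 + ‖φ z‖) :=
          mul_nonneg (by linarith) (by positivity)
        nlinarith [h2]
      · refine (hevB.and hevbd).mono fun z ⟨hzB, hbd⟩ => ?_
        have hKsq := hKnorm z hzB
        have hpos : (0 : ℝ) ≤ 1 - ‖z‖ ^ 2 := by
          have := mem_ball_zero_iff.mp hzB; nlinarith [norm_nonneg z]
        calc 1 - ‖φ z‖ ^ 2 = ‖Kφ z‖ ^ 2 * (1 - ‖z‖ ^ 2) := hKsq.symm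
          _ ≤ (α * ‖h‖) ^ 2 * (1 - ‖z‖ ^ 2) := by
              have hsq2 : ‖Kφ z‖ ^ 2 ≤ (α * ‖h‖) ^ 2 := by
                nlinarith [norm_nonneg (Kφ z)]
              exact mul_le_mul_of_nonneg_right hsq2 hpos
      · simpa using hnz.const_mul ((α * ‖h‖) ^ 2)
    have hφn1 : Tendsto (fun z => ‖φ z‖ ^ 2) L (𝓝 1) := by
      have h2 : Tendsto (fun z => (1:ℝ) - (1 - ‖φ z‖ ^ 2)) L (𝓝 (1 - 0)) :=
        tendsto_const_nhds.sub hφn0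
      simpa using h2
    -- ⟪ξ, φ z⟫ → 1
    have hξφ1 : Tendsto (fun z => (⟪ξ, φ z⟫ : ℂ)) L (𝓝 1) := by
      have h0 : Tendsto (fun z => (1 : ℂ) - ⟪ξ, φ z⟫) L (𝓝 0) := by
        rw [tendsto_zero_iff_norm_tendsto_zero]
        apply squeeze_zero' (g := fun z => ‖h‖ * (α * ‖h‖) * ‖(1 : ℂ) - ⟪ζ, z⟫‖)
        · exact Eventually.of_forall fun z => norm_nonneg _
        · refine (hevB.and hevbd).mono fun z ⟨hzB, hbd⟩ => ?_
          have hdζ : (1 : ℂ) - ⟪ζ, z⟫ ≠ 0 := by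
            intro hc
            have h1 : (⟪ζ, z⟫ : ℂ) = 1 := by linear_combination -hc
            have h2 := norm_inner_le_norm (𝕜 := ℂ) ζ z
            rw [h1, hζ, one_mul] at h2
            simp only [norm_one] at h2
            exact absurd (mem_ball_zero_iff.mp hzB) (not_lt.mpr h2)
          have hfac : (1 : ℂ) - ⟪ξ, φ z⟫ = toFunφ h z * (1 - ⟪ζ, z⟫) := by
            rw [hh z hzB, div_mul_cancel₀ _ hdζ]
          have hCS : ‖toFunφ h z‖ ≤ ‖Kφ z‖ * ‖h‖ := by
            rw [hreproφ h z hzB]; exact norm_inner_le_norm _ _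
          rw [hfac, norm_mul]
          have : ‖toFunφ h z‖ ≤ ‖h‖ * (α * ‖h‖) := by
            calc ‖toFunφ h z‖ ≤ ‖Kφ z‖ * ‖h‖ := hCS
              _ ≤ (α * ‖h‖) * ‖h‖ := by
                  apply mul_le_mul_of_nonneg_right hbd (norm_nonneg h)
              _ = ‖h‖ * (α * ‖h‖) := by ring
          exact mul_le_mul_of_nonneg_right this (norm_nonneg _)
        · have h1 : Tendsto (fun z => (1 : ℂ) - ⟪ζ, z⟫) L (𝓝 0) := by
            have h1' : Tendsto (fun z => (1 : ℂ) - ⟪ζ, z⟫) L (𝓝 (1 - 1)) :=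
              tendsto_const_nhds.sub hζz
            simpa using h1'
          have h2 : Tendsto (fun z => ‖(1 : ℂ) - ⟪ζ, z⟫‖) L (𝓝 0) :=
            tendsto_zero_iff_norm_tendsto_zero.mp h1
          simpa using h2.const_mul (‖h‖ * (α * ‖h‖))
      have h4 : Tendsto (fun z => (1 : ℂ) - ((1:ℂ) - ⟪ξ, φ z⟫)) L (𝓝 (1 - 0)) :=
        tendsto_const_nhds.sub h0
      simp only [sub_sub_cancel] at h4
      simpa using h4
    -- φ z → ξ
    have hφξ : Tendsto φ L (𝓝 ξ) := by
      rw [tendsto_iff_norm_sub_tendsto_zero]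
      have hsq : Tendsto (fun z => ‖φ z - ξ‖ ^ 2) L (𝓝 0) := by
        have hre : Tendsto (fun z => Complex.re (⟪ξ, φ z⟫ : ℂ)) L (𝓝 1) := by
          have h5 := (Complex.continuous_re.tendsto 1).comp hξφ1
          simpa only [Function.comp_def, Complex.one_re] using h5
        have key : ∀ z, ‖φ z - ξ‖ ^ 2 = ‖φ z‖ ^ 2 - 2 * Complex.re (⟪ξ, φ z⟫ : ℂ) + 1 := by
          intro z
          have h5 := norm_sub_sq (𝕜 := ℂ) (φ z) ξ
          rw [hξ] at h5
          have hconj : Complex.re (⟪φ z, ξ⟫ : ℂ) = Complex.re (⟪ξ, φ z⟫ : ℂ) := by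
            rw [← inner_conj_symm ξ (φ z), Complex.conj_re]
          rw [h5, RCLike.re_to_complex, hconj]; norm_num
        simp only [key]
        have h6 : Tendsto
            (fun z => (‖φ z‖ ^ 2 - 2 * Complex.re (⟪ξ, φ z⟫ : ℂ)) + 1) L
            (𝓝 ((1 - 2 * 1) + 1)) :=
          (hφn1.sub (hre.const_mul 2)).add tendsto_const_nhds
        have h7 : ((1:ℝ) - 2 * 1) + 1 = 0 := by norm_num
        rw [← h7]; exact h6
      have : Tendsto (fun z => Real.sqrt (‖φ z - ξ‖ ^ 2)) L (𝓝 0) := by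
        have h8 := (Real.continuous_sqrt.tendsto 0).comp hsq
        simpa only [Function.comp_def, Real.sqrt_zero] using h8
      refine this.congr fun z => ?_
      exact Real.sqrt_sq (norm_nonneg _)
    -- the limit property on the span of kernels
    have hP : ∀ g ∈ Submodule.span ℂ (Kφ '' B),
        Tendsto (fun z => toFunφ g z) L (𝓝 ⟪h, g⟫) := by
      intro g hg
      induction hg using Submodule.span_induction with
      | mem x hx =>
        obtain ⟨w, hwB, rfl⟩ := hx
        have hwlt : ‖w‖ < 1 := mem_ball_zero_iff.mp hwB
        -- limit value
        have hval : (⟪h, Kφ w⟫ : ℂ) = (1 - ⟪φ w, ξ⟫) / (1 - ⟪w, ζ⟫) := by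
          have h1 : (⟪Kφ w, h⟫ : ℂ) = (1 - ⟪ξ, φ w⟫) / (1 - ⟪ζ, w⟫) := by
            rw [← hreproφ h w hwB, hh w hwB]
          have h2 : (⟪h, Kφ w⟫ : ℂ) = conj (⟪Kφ w, h⟫ : ℂ) := by
            rw [inner_conj_symm]
          rw [h2, h1, map_div₀, map_sub, map_sub, map_one,
            inner_conj_symm, inner_conj_symm]
        -- denominator nonzero at the limit
        have hdw : (1 : ℂ) - ⟪w, ζ⟫ ≠ 0 := hden_ne w ζ hwlt (le_of_eq hζ)
        have hnum : Tendsto (fun z => (1 : ℂ) - ⟪φ w, φ z⟫) L (𝓝 (1 - ⟪φ w, ξ⟫)) := by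
          have hc : Continuous fun v : EuclideanSpace ℂ (Fin m) => (⟪φ w, v⟫ : ℂ) :=
            continuous_const.inner continuous_id
          exact tendsto_const_nhds.sub ((hc.tendsto ξ).comp hφξ)
        have hdenl : Tendsto (fun z => (1 : ℂ) - ⟪w, z⟫) L (𝓝 (1 - ⟪w, ζ⟫)) := by
          have hc : Continuous fun z : EuclideanSpace ℂ (Fin n) => (⟪w, z⟫ : ℂ) :=
            continuous_const.inner continuous_id
          exact tendsto_const_nhds.sub ((hc.tendsto ζ).comp hid)
        have hlim : Tendsto (fun z => ((1 : ℂ) - ⟪φ w, φ z⟫) / (1 - ⟪w, z⟫)) L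
            (𝓝 ((1 - ⟪φ w, ξ⟫) / (1 - ⟪w, ζ⟫))) := hnum.div hdenl hdw
        rw [hval]
        refine hlim.congr' ?_
        exact hevB.mono fun z hz => (hkerφ z w hz hwB).symm
      | zero => simpa using (tendsto_const_nhds : Tendsto (fun _ => (0 : ℂ)) L (𝓝 0))
      | add x y hx hy ihx ihy =>
        have : Tendsto (fun z => toFunφ x z + toFunφ y z) L (𝓝 (⟪h, x⟫ + ⟪h, y⟫)) :=
          ihx.add ihy
        simpa [map_add, inner_add_right] using this
      | smul c x hx ihx =>
        have : Tendsto (fun z => c * toFunφ x z) L (𝓝 (c * ⟪h, x⟫)) := ihx.const_mul c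
        simpa [map_smul, inner_smul_right, Pi.smul_apply, smul_eq_mul] using this
    -- density argument
    rw [Metric.tendsto_nhds]
    intro ε hε
    set M : ℝ := α * ‖h‖ + ‖h‖ + 1 with hM
    have hM0 : 0 < M := by positivity
    obtain ⟨g, hgmem, hgd⟩ := hdense.exists_dist_lt f (show (0 : ℝ) < ε / (3 * M) by positivity)
    have hgspan : g ∈ Submodule.span ℂ (Kφ '' B) := hgmem
    have hPg := hP g hgspan
    have hPg' : ∀ᶠ z in L, dist (toFunφ g z) ⟪h, g⟫ < ε / 3 :=
      Metric.tendsto_nhds.mp hPg (ε / 3) (by positivity)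
    have hfg : ‖f - g‖ < ε / (3 * M) := by rwa [dist_eq_norm] at hgd
    filter_upwards [hevB, hevbd, hPg'] with z hzB hbd hgz
    have h1 : dist (toFunφ f z) (toFunφ g z) < ε / 3 := by
      rw [dist_eq_norm]
      have he : toFunφ f z - toFunφ g z = ⟪Kφ z, f - g⟫ := by
        rw [← hreproφ (f - g) z hzB, map_sub]; rfl
      rw [he]
      calc ‖(⟪Kφ z, f - g⟫ : ℂ)‖ ≤ ‖Kφ z‖ * ‖f - g‖ := norm_inner_le_norm _ _
        _ ≤ M * ‖f - g‖ := by
            apply mul_le_mul_of_nonneg_right _ (norm_nonneg _)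
            calc ‖Kφ z‖ ≤ α * ‖h‖ := hbd
              _ ≤ M := by rw [hM]; linarith [norm_nonneg h]
        _ < M * (ε / (3 * M)) := by
            apply mul_lt_mul_of_pos_left hfg hM0
        _ = ε / 3 := by field_simp
    have h2 : dist (⟪h, g⟫ : ℂ) ⟪h, f⟫ < ε / 3 := by
      rw [dist_eq_norm]
      have he : (⟪h, g⟫ : ℂ) - ⟪h, f⟫ = ⟪h, g - f⟫ := (inner_sub_right h g f).symm
      rw [he]
      calc ‖(⟪h, g - f⟫ : ℂ)‖ ≤ ‖h‖ * ‖g - f‖ := norm_inner_le_norm _ _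
        _ = ‖h‖ * ‖f - g‖ := by rw [norm_sub_rev]
        _ ≤ M * ‖f - g‖ := by
            apply mul_le_mul_of_nonneg_right _ (norm_nonneg _)
            rw [hM]; nlinarith [mul_nonneg hα.le (norm_nonneg h)]
        _ < M * (ε / (3 * M)) := mul_lt_mul_of_pos_left hfg hM0
        _ = ε / 3 := by field_simp
    calc dist (toFunφ f z) ⟪h, f⟫ ≤
        dist (toFunφ f z) (toFunφ g z) + dist (toFunφ g z) ⟪h, g⟫ + dist (⟪h, g⟫ : ℂ) ⟪h, f⟫ :=
          dist_triangle4 _ _ _ _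
      _ < ε / 3 + ε / 3 + ε / 3 := by linarith
      _ = ε := by ring
end

section
/- Julia-type inequality for the Schur-Agler class: if φ ∈ S(n,m), ζ ∈ ∂B^n, ξ ∈ ∂B^m, and h(z) = (1-⟨φ(z),ξ⟩)/(1-⟨z,ζ⟩) belongs to H(φ) with ‖h‖^2 = L, then for all z ∈ B^n: |1 - ⟨φ(z),ξ⟩|^2 / (1 - |φ(z)|^2) ≤ L · |1 - ⟨z,ζ⟩|^2 / (1 - |z|^2). -/
open Metric Filter Topology
open scoped ComplexConjugate ComplexOrder

local notation "⟪" x ", " y "⟫" => @inner ℂ _ _ x y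

/-- Julia-type inequality for the Schur–Agler class: if `φ ∈ S(n,m)`,
`ζ ∈ ∂Bⁿ`, `ξ ∈ ∂Bᵐ`, and `h(z) = (1-⟨φ(z),ξ⟩)/(1-⟨z,ζ⟩)` belongs to `H(φ)` with
`‖h‖² = L`, then for all `z ∈ Bⁿ`:
`|1 - ⟨φ(z),ξ⟩|² / (1 - ‖φ(z)‖²) ≤ L · |1 - ⟨z,ζ⟩|² / (1 - ‖z‖²)`. -/
theorem schur_agler_julia_inequality
    (n m : ℕ)
    (φ : EuclideanSpace ℂ (Fin n) → EuclideanSpace ℂ (Fin m))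
    (hφmap : ∀ z ∈ ball (0 : EuclideanSpace ℂ (Fin n)) 1,
      φ z ∈ ball (0 : EuclideanSpace ℂ (Fin m)) 1)
    (hφhol : DifferentiableOn ℂ φ (ball (0 : EuclideanSpace ℂ (Fin n)) 1))
    (hpsd : SchurAglerKernelPos φ)
    (ζ : EuclideanSpace ℂ (Fin n)) (hζ : ‖ζ‖ = 1)
    (ξ : EuclideanSpace ℂ (Fin m)) (hξ : ‖ξ‖ = 1)
    (Hφ : Type*) [NormedAddCommGroup Hφ] [InnerProductSpace ℂ Hφ] [CompleteSpace Hφ]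
    (toFunφ : Hφ →ₗ[ℂ] (EuclideanSpace ℂ (Fin n) → ℂ))
    (hinjφ : Function.Injective toFunφ)
    (Kφ : EuclideanSpace ℂ (Fin n) → Hφ)
    (hreproφ : ∀ (f : Hφ) (z : EuclideanSpace ℂ (Fin n)),
      z ∈ ball (0 : EuclideanSpace ℂ (Fin n)) 1 → toFunφ f z = ⟪Kφ z, f⟫)
    (hkerφ : ∀ z w : EuclideanSpace ℂ (Fin n),
      z ∈ ball (0 : EuclideanSpace ℂ (Fin n)) 1 →
      w ∈ ball (0 : EuclideanSpace ℂ (Fin n)) 1 →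
      toFunφ (Kφ w) z = (1 - ⟪φ w, φ z⟫) / (1 - ⟪w, z⟫))
    (h : Hφ)
    (hh : ∀ z ∈ ball (0 : EuclideanSpace ℂ (Fin n)) 1,
      toFunφ h z = (1 - ⟪ξ, φ z⟫) / (1 - ⟪ζ, z⟫))
    (L : ℝ) (hL : ‖h‖ ^ 2 = L) :
    ∀ z ∈ ball (0 : EuclideanSpace ℂ (Fin n)) 1,
      ‖1 - ⟪ξ, φ z⟫‖ ^ 2 / (1 - ‖φ z‖ ^ 2) ≤
        L * (‖1 - ⟪ζ, z⟫‖ ^ 2 / (1 - ‖z‖ ^ 2)) := by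

  intro z hz
  have hz1 : ‖z‖ < 1 := mem_ball_zero_iff.mp hz
  have hφz1 : ‖φ z‖ < 1 := mem_ball_zero_iff.mp (hφmap z hz)
  have hQ : (0:ℝ) < 1 - ‖z‖ ^ 2 := by nlinarith [norm_nonneg z]
  have hP : (0:ℝ) < 1 - ‖φ z‖ ^ 2 := by nlinarith [norm_nonneg (φ z)]
  have hden : (1 : ℂ) - ⟪ζ, z⟫ ≠ 0 := by
    intro hcon
    have h1 : ⟪ζ, z⟫ = 1 := by linear_combination -hcon
    have h2 : ‖⟪ζ, z⟫‖ ≤ ‖ζ‖ * ‖z‖ := by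
      exact norm_inner_le_norm ζ z
    rw [h1, hζ, one_mul] at h2
    simp at h2
    linarith
  set A := ‖1 - ⟪ξ, φ z⟫‖ with hA
  set B := ‖1 - ⟪ζ, z⟫‖ with hB
  have hBpos : 0 < B := by
    rw [hB]
    exact norm_pos_iff.mpr hden
  -- norm of kernel at z
  have hKval : ⟪Kφ z, Kφ z⟫ = (((1 - ‖φ z‖ ^ 2) / (1 - ‖z‖ ^ 2) : ℝ) : ℂ) := by
    rw [← hreproφ (Kφ z) z hz, hkerφ z z hz hz]
    have h1 : ⟪φ z, φ z⟫ = ((‖φ z‖ ^ 2 : ℝ) : ℂ) := by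
      exact_mod_cast inner_self_eq_norm_sq_to_K (𝕜 := ℂ) (φ z)
    have h2 : ⟪z, z⟫ = ((‖z‖ ^ 2 : ℝ) : ℂ) := by
      exact_mod_cast inner_self_eq_norm_sq_to_K (𝕜 := ℂ) z
    rw [h1, h2]
    push_cast
    ring
  have hKnorm : ‖Kφ z‖ ^ 2 = (1 - ‖φ z‖ ^ 2) / (1 - ‖z‖ ^ 2) := by
    have h1 : ⟪Kφ z, Kφ z⟫ = ((‖Kφ z‖ ^ 2 : ℝ) : ℂ) := by
      exact_mod_cast inner_self_eq_norm_sq_to_K (𝕜 := ℂ) (Kφ z)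
    rw [hKval] at h1
    exact_mod_cast h1.symm
  -- Cauchy-Schwarz
  have hCS : ‖⟪Kφ z, h⟫‖ ≤ ‖Kφ z‖ * ‖h‖ := by
    exact norm_inner_le_norm _ _
  have hval : toFunφ h z = (1 - ⟪ξ, φ z⟫) / (1 - ⟪ζ, z⟫) := hh z hz
  have habs : ‖⟪Kφ z, h⟫‖ = A / B := by
    rw [← hreproφ h z hz, hval, norm_div]
  have hAB : A / B ≤ ‖Kφ z‖ * ‖h‖ := habs ▸ hCS
  have hA2 : A ≤ ‖Kφ z‖ * ‖h‖ * B := by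
    have := mul_le_mul_of_nonneg_right hAB (le_of_lt hBpos)
    rwa [div_mul_cancel₀ _ (ne_of_gt hBpos)] at this
  have hAnn : 0 ≤ A := norm_nonneg _
  have hKnn : 0 ≤ ‖Kφ z‖ := norm_nonneg _
  have hhnn : 0 ≤ ‖h‖ := norm_nonneg _
  have hA2sq : A ^ 2 ≤ (1 - ‖φ z‖ ^ 2) / (1 - ‖z‖ ^ 2) * L * B ^ 2 := by
    have hsq : A ^ 2 ≤ (‖Kφ z‖ * ‖h‖ * B) ^ 2 := by
      apply sq_le_sq' _ hA2
      nlinarith [mul_nonneg (mul_nonneg hKnn hhnn) (le_of_lt hBpos)]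
    calc A ^ 2 ≤ (‖Kφ z‖ * ‖h‖ * B) ^ 2 := hsq
      _ = ‖Kφ z‖ ^ 2 * ‖h‖ ^ 2 * B ^ 2 := by ring
      _ = (1 - ‖φ z‖ ^ 2) / (1 - ‖z‖ ^ 2) * L * B ^ 2 := by rw [hKnorm, hL]
  have hkey : A ^ 2 * (1 - ‖z‖ ^ 2) ≤ (1 - ‖φ z‖ ^ 2) * (L * B ^ 2) := by
    have hstep := mul_le_mul_of_nonneg_right hA2sq (le_of_lt hQ)
    calc A ^ 2 * (1 - ‖z‖ ^ 2)
        ≤ (1 - ‖φ z‖ ^ 2) / (1 - ‖z‖ ^ 2) * L * B ^ 2 * (1 - ‖z‖ ^ 2) := hstep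
      _ = (1 - ‖φ z‖ ^ 2) * (L * B ^ 2) := by field_simp
  rw [← mul_div_assoc, div_le_div_iff₀ hP hQ]
  nlinarith [hkey]
end

section
/- If φ ∈ S(n,m) satisfies condition (C) at e_1 (with φ having K-limit e_1 there after rotations), then the directional derivative D_1 φ_1(z) (derivative of the first component in the e_1 direction) has K-limit L at e_1, where L = liminf_{z→e_1}(1-|φ(z)|^2)/(1-|z|^2). -/
open Metric Filter Topology
open scoped ComplexConjugate ComplexOrder

local notation "⟪" x ", " y "⟫" => @inner ℂ _ _ x y

/-- `f` has K-limit `L` at `ζ`: `f(z) → L` as `z → ζ` within every Koranyi region. -/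
def HasKLimit {n : ℕ} {X : Type*} [TopologicalSpace X]
    (f : EuclideanSpace ℂ (Fin n) → X) (ζ : EuclideanSpace ℂ (Fin n)) (L : X) : Prop :=
  ∀ α > (0 : ℝ), Tendsto f (𝓝[Koranyi α ζ] ζ) (𝓝 L)

set_option maxHeartbeats 1000000

noncomputable def Complex.abs : AbsoluteValue ℂ ℝ := NormedField.toAbsoluteValue ℂ

@[simp] theorem Complex.norm_eq_abs (z : ℂ) : ‖z‖ = Complex.abs z := rfl

@[simp] theorem Complex.abs_ofReal (r : ℝ) : Complex.abs (r : ℂ) = |r| := by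
  rw [← Complex.norm_eq_abs, Complex.norm_real, Real.norm_eq_abs]

theorem Complex.continuous_abs : Continuous Complex.abs := continuous_norm

@[simp] theorem Complex.abs_conj (z : ℂ) : Complex.abs (conj z) = Complex.abs z := by
  rw [← Complex.norm_eq_abs, ← Complex.norm_eq_abs, Complex.norm_conj]

theorem Complex.sq_abs (z : ℂ) : Complex.abs z ^ 2 = Complex.normSq z := by
  rw [← Complex.norm_eq_abs, Complex.sq_norm]

theorem Complex.re_le_abs (z : ℂ) : z.re ≤ Complex.abs z := by
  rw [← Complex.norm_eq_abs]; exact Complex.re_le_norm z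

namespace JC



variable {d d' : ℕ}

noncomputable def fq (φ : EuclideanSpace ℂ (Fin d) → EuclideanSpace ℂ (Fin d'))
    (z : EuclideanSpace ℂ (Fin d)) : ℝ := (1 - ‖φ z‖ ^ 2) / (1 - ‖z‖ ^ 2)

noncomputable def kern (φ : EuclideanSpace ℂ (Fin d) → EuclideanSpace ℂ (Fin d'))
    (a b : EuclideanSpace ℂ (Fin d)) : ℂ :=
  (1 - ⟪φ a, φ b⟫) / (1 - ⟪a, b⟫)

noncomputable def hq {k k' : ℕ} (φ : EuclideanSpace ℂ (Fin (k + 1)) → EuclideanSpace ℂ (Fin (k' + 1)))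
    (z : EuclideanSpace ℂ (Fin (k + 1))) : ℂ := (1 - φ z 0) / (1 - z 0)

noncomputable def e1 {k : ℕ} : EuclideanSpace ℂ (Fin (k + 1)) := EuclideanSpace.single 0 1

theorem e1_apply_zero {k : ℕ} : (e1 : EuclideanSpace ℂ (Fin (k + 1))) 0 = 1 := by
  simp [e1, EuclideanSpace.single_apply]

theorem norm_e1 {k : ℕ} : ‖(e1 : EuclideanSpace ℂ (Fin (k + 1)))‖ = 1 := by
  simp [e1]

theorem inner_e1_left {k : ℕ} (z : EuclideanSpace ℂ (Fin (k + 1))) :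
    ⟪(e1 : EuclideanSpace ℂ (Fin (k + 1))), z⟫ = z 0 := by
  simp [e1, EuclideanSpace.inner_single_left]

theorem inner_e1_right {k : ℕ} (z : EuclideanSpace ℂ (Fin (k + 1))) :
    ⟪z, (e1 : EuclideanSpace ℂ (Fin (k + 1)))⟫ = conj (z 0) := by
  simp [e1, EuclideanSpace.inner_single_right]

theorem abs_coord_le_norm {k : ℕ} (z : EuclideanSpace ℂ (Fin k)) (i : Fin k) :
    Complex.abs (z i) ≤ ‖z‖ := by
  have h1 : ⟪(EuclideanSpace.single i (1:ℂ)), z⟫ = z i := by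
    simp [EuclideanSpace.inner_single_left]
  calc Complex.abs (z i) = ‖⟪(EuclideanSpace.single i (1:ℂ)), z⟫‖ := by
        rw [h1, Complex.norm_eq_abs]
    _ ≤ ‖(EuclideanSpace.single i (1:ℂ))‖ * ‖z‖ := norm_inner_le_norm _ _
    _ = ‖z‖ := by simp

theorem ball_norm_lt {k : ℕ} {z : EuclideanSpace ℂ (Fin k)}
    (hz : z ∈ ball (0 : EuclideanSpace ℂ (Fin k)) 1) : ‖z‖ < 1 := by
  rwa [mem_ball_zero_iff] at hz

theorem ball_pos {k : ℕ} {z : EuclideanSpace ℂ (Fin k)}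
    (hz : z ∈ ball (0 : EuclideanSpace ℂ (Fin k)) 1) : 0 < 1 - ‖z‖ ^ 2 := by
  have h := ball_norm_lt hz
  nlinarith [norm_nonneg z]

theorem ball_coord_ne_one {k : ℕ} {z : EuclideanSpace ℂ (Fin (k + 1))}
    (hz : z ∈ ball (0 : EuclideanSpace ℂ (Fin (k + 1))) 1) : (1 : ℂ) - z 0 ≠ 0 := by
  intro h
  have h2 : z 0 = 1 := by
    have := sub_eq_zero.mp h
    exact this.symm
  have h3 : Complex.abs (z 0) ≤ ‖z‖ := abs_coord_le_norm z 0
  rw [h2] at h3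
  simp at h3
  have := ball_norm_lt hz
  linarith

theorem kern_diag (φ : EuclideanSpace ℂ (Fin d) → EuclideanSpace ℂ (Fin d'))
    (a : EuclideanSpace ℂ (Fin d)) : kern φ a a = ((fq φ a : ℝ) : ℂ) := by
  unfold kern fq
  have h1 : ⟪φ a, φ a⟫ = ((‖φ a‖^2 : ℝ) : ℂ) := by exact_mod_cast inner_self_eq_norm_sq_to_K (φ a)
  have h2 : ⟪a, a⟫ = ((‖a‖^2 : ℝ) : ℂ) := by exact_mod_cast inner_self_eq_norm_sq_to_K a
  rw [h1, h2]
  push_cast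
  ring

theorem fq_nonneg {φ : EuclideanSpace ℂ (Fin d) → EuclideanSpace ℂ (Fin d')}
    {z : EuclideanSpace ℂ (Fin d)}
    (hz : z ∈ ball (0 : EuclideanSpace ℂ (Fin d)) 1)
    (hφz : φ z ∈ ball (0 : EuclideanSpace ℂ (Fin d')) 1) : 0 ≤ fq φ z := by
  unfold fq
  have h1 := ball_pos hz
  have h2 := ball_norm_lt hφz
  have : 0 ≤ 1 - ‖φ z‖ ^ 2 := by nlinarith [norm_nonneg (φ z)]
  positivity



/-- sesquilinear form -/
noncomputable def S (φ : EuclideanSpace ℂ (Fin d) → EuclideanSpace ℂ (Fin d')) {N : ℕ}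
    (p : Fin N → EuclideanSpace ℂ (Fin d)) (u v : Fin N → ℂ) : ℂ :=
  ∑ i, ∑ j, u i * conj (v j) * kern φ (p j) (p i)

theorem conj_kern (φ : EuclideanSpace ℂ (Fin d) → EuclideanSpace ℂ (Fin d'))
    (a b : EuclideanSpace ℂ (Fin d)) : conj (kern φ a b) = kern φ b a := by
  unfold kern
  rw [map_div₀, map_sub, map_one, inner_conj_symm, map_sub, map_one, inner_conj_symm]

theorem S_conj (φ : EuclideanSpace ℂ (Fin d) → EuclideanSpace ℂ (Fin d')) {N : ℕ}
    (p : Fin N → EuclideanSpace ℂ (Fin d)) (u v : Fin N → ℂ) :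
    S φ p v u = conj (S φ p u v) := by
  unfold S
  rw [map_sum, Finset.sum_comm]
  refine Finset.sum_congr rfl fun i _ => ?_
  rw [map_sum]
  refine Finset.sum_congr rfl fun j _ => ?_
  rw [map_mul, map_mul, conj_kern, RingHomCompTriple.comp_apply]
  ring_nf
  rw [RingHom.id_apply]
  ring

theorem S_expand (φ : EuclideanSpace ℂ (Fin d) → EuclideanSpace ℂ (Fin d')) {N : ℕ}
    (p : Fin N → EuclideanSpace ℂ (Fin d)) (u v : Fin N → ℂ) (a : ℂ) :
    S φ p (fun i => a * u i + v i) (fun i => a * u i + v i)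
      = a * conj a * S φ p u u + a * S φ p u v + conj a * S φ p v u + S φ p v v := by
  unfold S
  have key : ∀ i j : Fin N,
      (a * u i + v i) * conj (a * u j + v j) * kern φ (p j) (p i)
        = a * conj a * (u i * conj (u j) * kern φ (p j) (p i))
          + a * (u i * conj (v j) * kern φ (p j) (p i))
          + conj a * (v i * conj (u j) * kern φ (p j) (p i))
          + v i * conj (v j) * kern φ (p j) (p i) := by
    intro i j
    rw [map_add, map_mul]
    ring
  simp only [key, Finset.sum_add_distrib, Finset.mul_sum]

theorem cs {φ : EuclideanSpace ℂ (Fin d) → EuclideanSpace ℂ (Fin d')}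
    (hpsd : SchurAglerKernelPos φ) {N : ℕ}
    (p : Fin N → EuclideanSpace ℂ (Fin d))
    (hp : ∀ i, p i ∈ ball (0 : EuclideanSpace ℂ (Fin d)) 1) (u v : Fin N → ℂ) :
    Complex.abs (S φ p u v) ^ 2 ≤ (S φ p u u).re * (S φ p v v).re := by
  have hQ : ∀ c, 0 ≤ S φ p c c := fun c => hpsd N p hp c
  have hQre : ∀ c, 0 ≤ (S φ p c c).re := fun c => (Complex.le_def.mp (hQ c)).1
  by_cases hzero : S φ p u v = 0
  · rw [hzero]
    simpa using mul_nonneg (hQre u) (hQre v)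
  · set s : ℝ := Complex.abs (S φ p u v) with hs_def
    have hs : 0 < s := by
      simpa [hs_def] using (Complex.abs.pos hzero)
    set μ : ℂ := conj (S φ p u v) / (s : ℂ) with hμ_def
    have hnorm : (‖S φ p u v‖ : ℂ) = (s : ℂ) := by
      rw [hs_def, Complex.norm_eq_abs]
    have hμS : μ * S φ p u v = (s : ℂ) := by
      rw [hμ_def, div_mul_eq_mul_div, Complex.conj_mul', hnorm]
      rw [sq]
      field_simp
    have hconjμ : conj μ = S φ p u v / (s : ℂ) := by
      rw [hμ_def, map_div₀, Complex.conj_conj, Complex.conj_ofReal]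
    have hμμ : μ * conj μ = 1 := by
      rw [hconjμ, hμ_def, div_mul_div_comm, mul_comm, Complex.mul_conj', hnorm]
      rw [sq]
      have : (s : ℂ) ≠ 0 := by
        exact_mod_cast hs.ne'
      field_simp
    have hquad : ∀ t : ℝ, 0 ≤ (S φ p u u).re * (t * t) + (-(2 * s)) * t + (S φ p v v).re := by
      intro t
      have h0 := hQre (fun i => (-(t : ℂ) * μ) * u i + v i)
      rw [S_expand] at h0
      set a : ℂ := -(t : ℂ) * μ with ha_def
      have hca : conj a = -(t : ℂ) * conj μ := by
        rw [ha_def, map_mul, map_neg, Complex.conj_ofReal]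
      have ha1 : a * conj a = ((t * t : ℝ) : ℂ) := by
        rw [hca, ha_def]
        have : -(t:ℂ) * μ * (-(t:ℂ) * conj μ) = ((t:ℂ) * (t:ℂ)) * (μ * conj μ) := by ring
        rw [this, hμμ, mul_one]
        push_cast
        ring
      have ha2 : a * S φ p u v = -((t * s : ℝ) : ℂ) := by
        rw [ha_def]
        have : -(t:ℂ) * μ * S φ p u v = -(t:ℂ) * (μ * S φ p u v) := by ring
        rw [this, hμS]
        push_cast
        ring
      have ha3 : conj a * S φ p v u = -((t * s : ℝ) : ℂ) := by
        rw [S_conj, ← map_mul, ha2, map_neg, Complex.conj_ofReal]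
      rw [ha1, ha2, ha3] at h0
      have hre : (((t * t : ℝ) : ℂ) * S φ p u u + -((t * s : ℝ) : ℂ)
          + -((t * s : ℝ) : ℂ) + S φ p v v).re
          = (t * t) * (S φ p u u).re - 2 * (t * s) + (S φ p v v).re := by
        simp [Complex.add_re, Complex.neg_re, Complex.ofReal_re, Complex.re_ofReal_mul]
        ring
      rw [hre] at h0
      linarith
    have hd := discrim_le_zero hquad
    rw [discrim] at hd
    have : Complex.abs (S φ p u v) ^ 2 = s ^ 2 := by rw [hs_def]
    rw [this]
    nlinarith [hd]



variable {d : ℕ}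

-- standalone: extraction of a minimizing sequence from a liminf along 𝓝[s] a in a metric space
theorem exists_seq_liminf {X : Type*} [MetricSpace X] {s : Set X} {a : X} {g : X → ℝ} {L C : ℝ}
    (hnn : ∀ z ∈ s, 0 ≤ g z)
    (hfin : ∃ᶠ z in 𝓝[s] a, g z ≤ C)
    (hL : Filter.liminf g (𝓝[s] a) = L) :
    ∃ x : ℕ → X, (∀ k, x k ∈ s) ∧ Tendsto x atTop (𝓝 a) ∧
      Tendsto (fun k => g (x k)) atTop (𝓝 L) := by
  set F := 𝓝[s] a with hF
  have hev0 : ∀ᶠ z in F, 0 ≤ g z := eventually_mem_nhdsWithin.mono hnn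
  have hbdd : F.IsBoundedUnder (· ≥ ·) g := ⟨0, eventually_map.2 hev0⟩
  have hcob : F.IsCoboundedUnder (· ≥ ·) g := by
    refine ⟨C, fun b hb => ?_⟩
    have hb' : ∀ᶠ z in F, b ≤ g z := eventually_map.1 hb
    obtain ⟨z, h1, h2⟩ := (hfin.and_eventually hb').exists
    linarith
  have hfreq : ∀ k : ℕ, ∃ᶠ z in F, |g z - L| < 1 / (k + 1) := by
    intro k
    have hε : (0:ℝ) < 1 / (k + 1) := by positivity
    have h1 : ∃ᶠ z in F, g z < L + 1 / (k + 1) :=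
      frequently_lt_of_liminf_lt hcob (by rw [hL]; linarith)
    have h2 : ∀ᶠ z in F, L - 1 / (k + 1) < g z :=
      eventually_lt_of_lt_liminf (by rw [hL]; linarith) hbdd
    refine (h1.and_eventually h2).mono fun z hz => ?_
    rw [abs_sub_lt_iff]
    constructor <;> linarith [hz.1, hz.2]
  have hstep : ∀ k : ℕ, ∃ z, z ∈ ball a (1 / (k + 1)) ∧ z ∈ s ∧ |g z - L| < 1 / (k + 1) := by
    intro k
    have hU : ball a (1 / (k + 1)) ∩ s ∈ F := by
      refine inter_mem (mem_nhdsWithin_of_mem_nhds (ball_mem_nhds _ (by positivity)))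
        self_mem_nhdsWithin
    obtain ⟨z, hzU, hzp⟩ := frequently_iff.mp (hfreq k) hU
    exact ⟨z, hzU.1, hzU.2, hzp⟩
  choose x hx1 hx2 hx3 using hstep
  have hlim0 : Tendsto (fun k : ℕ => 1 / ((k : ℝ) + 1)) atTop (𝓝 0) :=
    tendsto_one_div_add_atTop_nhds_zero_nat
  refine ⟨x, hx2, ?_, ?_⟩
  · rw [tendsto_iff_dist_tendsto_zero]
    exact squeeze_zero (fun k => dist_nonneg) (fun k => le_of_lt (mem_ball.mp (hx1 k))) hlim0
  · rw [tendsto_iff_dist_tendsto_zero]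
    refine squeeze_zero (fun k => dist_nonneg) (fun k => ?_) hlim0
    rw [Real.dist_eq]
    exact le_of_lt (hx3 k)



noncomputable def rad {k : ℕ} (t : ℝ) : EuclideanSpace ℂ (Fin (k + 1)) := (t : ℂ) • e1

theorem rad_coord {k : ℕ} (t : ℝ) : (rad t : EuclideanSpace ℂ (Fin (k + 1))) 0 = (t : ℂ) := by
  simp [rad, e1, EuclideanSpace.single_apply]

theorem norm_rad {k : ℕ} (t : ℝ) : ‖(rad t : EuclideanSpace ℂ (Fin (k + 1)))‖ = |t| := by
  rw [rad, norm_smul]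
  simp [e1]

theorem rad_mem_ball {k : ℕ} {t : ℝ} (ht : t ∈ Set.Ioo (-1 : ℝ) 1) :
    (rad t : EuclideanSpace ℂ (Fin (k + 1))) ∈ ball (0 : EuclideanSpace ℂ (Fin (k + 1))) 1 := by
  rw [mem_ball_zero_iff, norm_rad, abs_lt]
  exact ⟨ht.1, ht.2⟩

theorem rad_inner_e1 {k : ℕ} (t : ℝ) :
    ⟪(e1 : EuclideanSpace ℂ (Fin (k + 1))), rad t⟫ = (t : ℂ) := by
  rw [inner_e1_left, rad_coord]

theorem rad_mem_koranyi {k : ℕ} {t : ℝ} (ht : t ∈ Set.Ioo (0 : ℝ) 1) :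
    (rad t : EuclideanSpace ℂ (Fin (k + 1))) ∈ Koranyi 3 e1 := by
  constructor
  · exact rad_mem_ball ⟨by linarith [ht.1], ht.2⟩
  · rw [rad_inner_e1, norm_rad, abs_of_pos ht.1]
    have : (1 : ℂ) - (t : ℂ) = ((1 - t : ℝ) : ℂ) := by push_cast; ring
    rw [this, Complex.norm_eq_abs, Complex.abs_ofReal, abs_of_nonneg (by linarith [ht.2])]
    nlinarith [ht.1, ht.2]

theorem tendsto_rad_nhds {k : ℕ} :
    Tendsto (rad : ℝ → EuclideanSpace ℂ (Fin (k + 1))) (𝓝[Set.Iio (1:ℝ)] 1) (𝓝 e1) := by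
  have hc : Continuous (rad : ℝ → EuclideanSpace ℂ (Fin (k + 1))) :=
    Complex.continuous_ofReal.smul continuous_const
  have h1 : (rad 1 : EuclideanSpace ℂ (Fin (k + 1))) = e1 := by
    rw [rad, Complex.ofReal_one, one_smul]
  exact (hc.tendsto' 1 e1 h1).mono_left nhdsWithin_le_nhds

theorem eventually_Ioo : ∀ᶠ t in 𝓝[Set.Iio (1:ℝ)] 1, t ∈ Set.Ioo (0:ℝ) 1 := by
  have h1 : ∀ᶠ t in 𝓝[Set.Iio (1:ℝ)] 1, t ∈ Set.Iio (1:ℝ) := self_mem_nhdsWithin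
  have h2 : ∀ᶠ t in 𝓝[Set.Iio (1:ℝ)] 1, (0:ℝ) < t :=
    eventually_nhdsWithin_of_eventually_nhds (eventually_gt_nhds (by norm_num))
  filter_upwards [h1, h2] with t ht1 ht2
  exact ⟨ht2, ht1⟩

theorem tendsto_rad_ball {k : ℕ} :
    Tendsto (rad : ℝ → EuclideanSpace ℂ (Fin (k + 1))) (𝓝[Set.Iio (1:ℝ)] 1)
      (𝓝[ball (0 : EuclideanSpace ℂ (Fin (k + 1))) 1] e1) := by
  rw [tendsto_nhdsWithin_iff]
  refine ⟨tendsto_rad_nhds, ?_⟩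
  filter_upwards [eventually_Ioo] with t ht
  exact rad_mem_ball ⟨by linarith [ht.1], ht.2⟩

theorem tendsto_rad_koranyi {k : ℕ} :
    Tendsto (rad : ℝ → EuclideanSpace ℂ (Fin (k + 1))) (𝓝[Set.Iio (1:ℝ)] 1)
      (𝓝[Koranyi 3 (e1 : EuclideanSpace ℂ (Fin (k + 1)))] e1) := by
  rw [tendsto_nhdsWithin_iff]
  refine ⟨tendsto_rad_nhds, ?_⟩
  filter_upwards [eventually_Ioo] with t ht
  exact rad_mem_koranyi ht


variable {d d' : ℕ}

theorem two_point {φ : EuclideanSpace ℂ (Fin d) → EuclideanSpace ℂ (Fin d')}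
    (hpsd : SchurAglerKernelPos φ) {a b : EuclideanSpace ℂ (Fin d)}
    (ha : a ∈ ball (0 : EuclideanSpace ℂ (Fin d)) 1)
    (hb : b ∈ ball (0 : EuclideanSpace ℂ (Fin d)) 1) :
    Complex.abs (kern φ b a) ^ 2 ≤ fq φ a * fq φ b := by
  have hp : ∀ i, (![a, b] : Fin 2 → EuclideanSpace ℂ (Fin d)) i ∈
      ball (0 : EuclideanSpace ℂ (Fin d)) 1 := by
    intro i
    fin_cases i
    · simpa using ha
    · simpa using hb
  have h := cs hpsd ![a, b] hp ![1, 0] ![0, 1]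
  have h1 : S φ ![a, b] ![1, 0] ![0, 1] = kern φ b a := by
    simp [S, Fin.sum_univ_two]
  have h2 : S φ ![a, b] ![1, 0] ![1, 0] = kern φ a a := by
    simp [S, Fin.sum_univ_two]
  have h3 : S φ ![a, b] ![0, 1] ![0, 1] = kern φ b b := by
    simp [S, Fin.sum_univ_two]
  rw [h1, h2, h3, kern_diag, kern_diag] at h
  simpa using h

theorem three_point {φ : EuclideanSpace ℂ (Fin d) → EuclideanSpace ℂ (Fin d')}
    (hpsd : SchurAglerKernelPos φ) {a b c : EuclideanSpace ℂ (Fin d)}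
    (ha : a ∈ ball (0 : EuclideanSpace ℂ (Fin d)) 1)
    (hb : b ∈ ball (0 : EuclideanSpace ℂ (Fin d)) 1)
    (hc : c ∈ ball (0 : EuclideanSpace ℂ (Fin d)) 1) :
    Complex.abs (kern φ c a - kern φ c b) ^ 2 ≤
      (fq φ a - (kern φ b a).re - (kern φ a b).re + fq φ b) * fq φ c := by
  have hp : ∀ i, (![a, b, c] : Fin 3 → EuclideanSpace ℂ (Fin d)) i ∈
      ball (0 : EuclideanSpace ℂ (Fin d)) 1 := by
    intro i
    fin_cases i
    · simpa using ha
    · simpa using hb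
    · simpa using hc
  have h := cs hpsd ![a, b, c] hp ![1, -1, 0] ![0, 0, 1]
  have h1 : S φ ![a, b, c] ![1, -1, 0] ![0, 0, 1] = kern φ c a - kern φ c b := by
    simp [S, Fin.sum_univ_three]
    ring
  have h2 : S φ ![a, b, c] ![1, -1, 0] ![1, -1, 0]
      = kern φ a a - kern φ b a - kern φ a b + kern φ b b := by
    simp [S, Fin.sum_univ_three]
    ring
  have h3 : S φ ![a, b, c] ![0, 0, 1] ![0, 0, 1] = kern φ c c := by
    simp [S, Fin.sum_univ_three]
  rw [h1, h2, h3, kern_diag φ a, kern_diag φ b, kern_diag φ c] at h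
  simpa using h

section Main

variable {n m : ℕ} {φ : EuclideanSpace ℂ (Fin (n + 1)) → EuclideanSpace ℂ (Fin (m + 1))} {L : ℝ}

/-- key limit inequality used twice -/
theorem key_ineq_of_seq
    (hpsd : SchurAglerKernelPos φ)
    {y : ℕ → EuclideanSpace ℂ (Fin (n + 1))} {η : EuclideanSpace ℂ (Fin (m + 1))}
    (hy1 : ∀ k, y k ∈ ball (0 : EuclideanSpace ℂ (Fin (n + 1))) 1)
    (hy2 : Tendsto y atTop (𝓝 (e1 : EuclideanSpace ℂ (Fin (n + 1)))))
    (hy3 : Tendsto (fun k => fq φ (y k)) atTop (𝓝 L))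
    (hy4 : Tendsto (fun k => φ (y k)) atTop (𝓝 η))
    {z : EuclideanSpace ℂ (Fin (n + 1))}
    (hz : z ∈ ball (0 : EuclideanSpace ℂ (Fin (n + 1))) 1) :
    Complex.abs ((1 - ⟪φ z, η⟫) / (1 - conj (z 0))) ^ 2 ≤ L * fq φ z := by
  have hineq : ∀ k, Complex.abs (kern φ z (y k)) ^ 2 ≤ fq φ (y k) * fq φ z := fun k =>
    two_point hpsd (hy1 k) hz
  have hden_ne : (1 : ℂ) - conj (z 0) ≠ 0 := by
    intro h
    apply ball_coord_ne_one hz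
    have h1 : conj (z 0) = 1 := by
      have := sub_eq_zero.mp h
      exact this.symm
    have : z 0 = 1 := by
      have := congrArg conj h1
      simpa using this
    rw [this]
    ring
  have hnum : Tendsto (fun k => (1 : ℂ) - ⟪φ z, φ (y k)⟫) atTop (𝓝 (1 - ⟪φ z, η⟫)) :=
    tendsto_const_nhds.sub (tendsto_const_nhds.inner hy4)
  have hden : Tendsto (fun k => (1 : ℂ) - ⟪z, y k⟫) atTop (𝓝 (1 - conj (z 0))) := by
    have h1 : Tendsto (fun k => ⟪z, y k⟫) atTop (𝓝 (⟪z, (e1 : EuclideanSpace ℂ (Fin (n + 1)))⟫)) :=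
      tendsto_const_nhds.inner hy2
    rw [inner_e1_right] at h1
    exact tendsto_const_nhds.sub h1
  have htend : Tendsto (fun k => kern φ z (y k)) atTop
      (𝓝 ((1 - ⟪φ z, η⟫) / (1 - conj (z 0)))) := hnum.div hden hden_ne
  have hlhs : Tendsto (fun k => Complex.abs (kern φ z (y k)) ^ 2) atTop
      (𝓝 (Complex.abs ((1 - ⟪φ z, η⟫) / (1 - conj (z 0))) ^ 2)) :=
    ((Complex.continuous_abs.tendsto _).comp htend).pow 2
  have hrhs : Tendsto (fun k => fq φ (y k) * fq φ z) atTop (𝓝 (L * fq φ z)) :=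
    hy3.mul tendsto_const_nhds
  exact le_of_tendsto_of_tendsto' hlhs hrhs hineq

theorem exists_good_seq
    (hφmap : ∀ z ∈ ball (0 : EuclideanSpace ℂ (Fin (n + 1))) 1,
      φ z ∈ ball (0 : EuclideanSpace ℂ (Fin (m + 1))) 1)
    (hpsd : SchurAglerKernelPos φ)
    (hfin : ∃ C : ℝ, ∃ᶠ z in
      𝓝[ball (0 : EuclideanSpace ℂ (Fin (n + 1))) 1] (e1 : EuclideanSpace ℂ (Fin (n + 1))),
      fq φ z ≤ C)
    (hL : Filter.liminf (fq φ)
      (𝓝[ball (0 : EuclideanSpace ℂ (Fin (n + 1))) 1] (e1 : EuclideanSpace ℂ (Fin (n + 1)))) = L)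
    (hrad : Tendsto (fun t => φ (rad t)) (𝓝[Set.Iio (1:ℝ)] 1)
      (𝓝 (e1 : EuclideanSpace ℂ (Fin (m + 1))))) :
    0 ≤ L ∧ ∃ v : ℕ → EuclideanSpace ℂ (Fin (n + 1)),
      (∀ k, v k ∈ ball (0 : EuclideanSpace ℂ (Fin (n + 1))) 1) ∧
      Tendsto v atTop (𝓝 (e1 : EuclideanSpace ℂ (Fin (n + 1)))) ∧
      Tendsto (fun k => fq φ (v k)) atTop (𝓝 L) ∧
      Tendsto (fun k => φ (v k)) atTop (𝓝 (e1 : EuclideanSpace ℂ (Fin (m + 1)))) := by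
  obtain ⟨C, hC⟩ := hfin
  obtain ⟨x, hx1, hx2, hx3⟩ := exists_seq_liminf
    (fun z hz => fq_nonneg hz (hφmap z hz)) hC hL
  have hL0 : 0 ≤ L :=
    ge_of_tendsto' hx3 fun k => fq_nonneg (hx1 k) (hφmap _ (hx1 k))
  refine ⟨hL0, ?_⟩
  obtain ⟨η, hηmem, σ, hσmono, hησ⟩ :=
    (isCompact_closedBall (0 : EuclideanSpace ℂ (Fin (m + 1))) 1).tendsto_subseq
      (fun k => ball_subset_closedBall (hφmap _ (hx1 k)))
  set y : ℕ → EuclideanSpace ℂ (Fin (n + 1)) := fun k => x (σ k) with hy_def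
  have hy1 : ∀ k, y k ∈ ball (0 : EuclideanSpace ℂ (Fin (n + 1))) 1 := fun k => hx1 _
  have hy2 : Tendsto y atTop (𝓝 (e1 : EuclideanSpace ℂ (Fin (n + 1)))) :=
    hx2.comp hσmono.tendsto_atTop
  have hy3 : Tendsto (fun k => fq φ (y k)) atTop (𝓝 L) := hx3.comp hσmono.tendsto_atTop
  have hy4 : Tendsto (fun k => φ (y k)) atTop (𝓝 η) := hησ
  have hηnorm : ‖η‖ ≤ 1 := mem_closedBall_zero_iff.mp hηmem
  -- show η 0 = 1
  have hη0 : η 0 = 1 := by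
    have hGb : ∀ t ∈ Set.Ioo (0:ℝ) 1,
        Complex.abs (1 - ⟪φ (rad t), η⟫) ≤ 2 * L * (1 - t) / (1 + t) := by
      intro t ht
      set z : EuclideanSpace ℂ (Fin (n + 1)) := rad t with hz_def
      have hzb : z ∈ ball (0 : EuclideanSpace ℂ (Fin (n + 1))) 1 :=
        rad_mem_ball ⟨by linarith [ht.1], ht.2⟩
      have hkey := key_ineq_of_seq hpsd hy1 hy2 hy3 hy4 hzb
      set G : ℝ := Complex.abs (1 - ⟪φ z, η⟫) with hG_def
      have hG0 : 0 ≤ G := Complex.abs.nonneg _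
      -- rewrite denominator
      have hz0 : z 0 = (t : ℂ) := rad_coord t
      have hden_abs : Complex.abs (1 - conj (z 0)) = 1 - t := by
        rw [hz0, Complex.conj_ofReal]
        have : (1 : ℂ) - (t : ℂ) = ((1 - t : ℝ) : ℂ) := by push_cast; ring
        rw [this, Complex.abs_ofReal, abs_of_nonneg (by linarith [ht.2])]
      have habs_div : Complex.abs ((1 - ⟪φ z, η⟫) / (1 - conj (z 0))) = G / (1 - t) := by
        rw [map_div₀, hden_abs]
      rw [habs_div] at hkey
      -- fq bound via G
      have hφz := hφmap z hzb
      have hA : Complex.abs ⟪φ z, η⟫ ≤ ‖φ z‖ := by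
        calc Complex.abs ⟪φ z, η⟫ = ‖⟪φ z, η⟫‖ := by rw [Complex.norm_eq_abs]
          _ ≤ ‖φ z‖ * ‖η‖ := norm_inner_le_norm _ _
          _ ≤ ‖φ z‖ * 1 := by
              have := norm_nonneg (φ z)
              nlinarith
          _ = ‖φ z‖ := mul_one _
      have hA1 : Complex.abs ⟪φ z, η⟫ < 1 := lt_of_le_of_lt hA (ball_norm_lt hφz)
      have htri : 1 - Complex.abs ⟪φ z, η⟫ ≤ G := by
        have h2 := Complex.abs.add_le (1 - ⟪φ z, η⟫) ⟪φ z, η⟫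
        rw [sub_add_cancel] at h2
        simp only [map_one] at h2
        linarith
      have hnum_bound : 1 - ‖φ z‖ ^ 2 ≤ 2 * G := by
        have h2 : Complex.abs ⟪φ z, η⟫ ^ 2 ≤ ‖φ z‖ ^ 2 := by
          nlinarith [Complex.abs.nonneg ⟪φ z, η⟫]
        nlinarith [Complex.abs.nonneg ⟪φ z, η⟫]
      have hfq_bound : fq φ z ≤ 2 * G / (1 - t ^ 2) := by
        have hnz : ‖z‖ = |t| := norm_rad t
        have ht2 : (0:ℝ) < 1 - t ^ 2 := by nlinarith [ht.1, ht.2]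
        have : fq φ z = (1 - ‖φ z‖ ^ 2) / (1 - t ^ 2) := by
          rw [fq, hnz, sq_abs]
        rw [this]
        gcongr
      -- combine
      have ht1 : (0:ℝ) < 1 - t := by linarith [ht.2]
      have ht3 : (0:ℝ) < 1 + t := by linarith [ht.1]
      rcases eq_or_lt_of_le hG0 with hG | hG
      · rw [← hG]
        positivity
      · have hchain : G ^ 2 / (1 - t) ^ 2 ≤ L * (2 * G / (1 - t ^ 2)) := by
          calc G ^ 2 / (1 - t) ^ 2 = (G / (1 - t)) ^ 2 := by rw [div_pow]
            _ ≤ L * fq φ z := hkey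
            _ ≤ L * (2 * G / (1 - t ^ 2)) := by
                exact mul_le_mul_of_nonneg_left hfq_bound hL0
        have hchain2 : G ^ 2 / (1 - t) ^ 2 ≤ (L * (2 * G)) / (1 - t ^ 2) := by
          rw [mul_div_assoc]
          exact hchain
        have ht4 : (0:ℝ) < 1 - t ^ 2 := by nlinarith [ht.1, ht.2]
        have ht5 : (0:ℝ) < (1 - t) ^ 2 := by positivity
        have h4 : G ^ 2 * (1 - t ^ 2) ≤ L * (2 * G) * (1 - t) ^ 2 :=
          (div_le_div_iff₀ ht5 ht4).mp hchain2
        rw [le_div_iff₀ ht3]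
        have hpos : 0 < G * (1 - t) := mul_pos hG ht1
        have h5 : (G * (1 + t)) * (G * (1 - t)) ≤ (2 * L * (1 - t)) * (G * (1 - t)) := by
          have e2 : (G * (1 + t)) * (G * (1 - t)) = G ^ 2 * (1 - t ^ 2) := by ring
          have e3 : (2 * L * (1 - t)) * (G * (1 - t)) = L * (2 * G) * (1 - t) ^ 2 := by ring
          rw [e2, e3]
          exact h4
        exact le_of_mul_le_mul_right h5 hpos
    -- pass to the limit t → 1⁻
    have hlhs : Tendsto (fun t => Complex.abs (1 - ⟪φ (rad t), η⟫)) (𝓝[Set.Iio (1:ℝ)] 1)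
        (𝓝 (Complex.abs (1 - η 0))) := by
      have h1 : Tendsto (fun t => ⟪φ (rad t : EuclideanSpace ℂ (Fin (n+1))), η⟫)
          (𝓝[Set.Iio (1:ℝ)] 1) (𝓝 ⟪(e1 : EuclideanSpace ℂ (Fin (m+1))), η⟫) :=
        hrad.inner tendsto_const_nhds
      rw [inner_e1_left] at h1
      exact (Complex.continuous_abs.tendsto _).comp (tendsto_const_nhds.sub h1)
    have hrhs : Tendsto (fun t : ℝ => 2 * L * (1 - t) / (1 + t)) (𝓝[Set.Iio (1:ℝ)] 1)
        (𝓝 0) := by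
      have : Tendsto (fun t : ℝ => 2 * L * (1 - t) / (1 + t)) (𝓝 1)
          (𝓝 (2 * L * (1 - 1) / (1 + 1))) := by
        apply Tendsto.div
        · exact (tendsto_const_nhds.mul (tendsto_const_nhds.sub tendsto_id))
        · exact tendsto_const_nhds.add tendsto_id
        · norm_num
      simpa using this.mono_left nhdsWithin_le_nhds
    have hle : Complex.abs (1 - η 0) ≤ 0 := by
      refine le_of_tendsto_of_tendsto hlhs hrhs ?_
      filter_upwards [eventually_Ioo] with t ht
      exact hGb t ht
    have : (1 : ℂ) - η 0 = 0 := by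
      have := Complex.abs.nonneg (1 - η 0)
      have habs0 : Complex.abs (1 - η 0) = 0 := le_antisymm hle this
      exact Complex.abs.eq_zero.mp habs0
    have := sub_eq_zero.mp this
    exact this.symm
  -- conclude η = e1
  have hηe1 : η = (e1 : EuclideanSpace ℂ (Fin (m + 1))) := by
    have hsum : ∑ i, ‖η i‖ ^ 2 ≤ 1 := by
      have h1 : ‖η‖ ^ 2 = ∑ i, ‖η i‖ ^ 2 := by
        rw [EuclideanSpace.norm_eq]
        rw [Real.sq_sqrt]
        positivity
      nlinarith [norm_nonneg η]
    have hzero : ∀ i, i ≠ 0 → η i = 0 := by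
      intro i hi
      have h0 : ‖η 0‖ ^ 2 = 1 := by rw [hη0]; norm_num
      have herase : ∑ j ∈ Finset.univ.erase 0, ‖η j‖ ^ 2 ≤ 0 := by
        have heq : ∑ j ∈ Finset.univ.erase 0, ‖η j‖ ^ 2 + ‖η 0‖ ^ 2 = ∑ j, ‖η j‖ ^ 2 :=
          Finset.sum_erase_add _ _ (Finset.mem_univ 0)
        linarith [hsum, heq, h0]
      have hterm : ‖η i‖ ^ 2 ≤ 0 := by
        have hmem : i ∈ Finset.univ.erase 0 := Finset.mem_erase.mpr ⟨hi, Finset.mem_univ i⟩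
        have hnn : ∀ j ∈ Finset.univ.erase 0, (0:ℝ) ≤ ‖η j‖ ^ 2 := fun j _ => sq_nonneg _
        calc ‖η i‖ ^ 2 ≤ ∑ j ∈ Finset.univ.erase 0, ‖η j‖ ^ 2 :=
              Finset.single_le_sum hnn hmem
          _ ≤ 0 := herase
      have : ‖η i‖ = 0 := by nlinarith [norm_nonneg (η i)]
      exact norm_eq_zero.mp this
    ext i
    by_cases hi : i = 0
    · subst hi
      rw [hη0]
      simp [e1, EuclideanSpace.single_apply]
    · rw [hzero i hi]
      simp [e1, EuclideanSpace.single_apply, hi]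
  exact ⟨y, hy1, hy2, hy3, hηe1 ▸ hy4⟩

theorem conj_hq (φ : EuclideanSpace ℂ (Fin (n + 1)) → EuclideanSpace ℂ (Fin (m + 1)))
    (z : EuclideanSpace ℂ (Fin (n + 1))) :
    conj (hq φ z) = (1 - conj (φ z 0)) / (1 - conj (z 0)) := by
  unfold hq
  rw [map_div₀, map_sub, map_one, map_sub, map_one]

section GoodSeq

variable {v : ℕ → EuclideanSpace ℂ (Fin (n + 1))}

theorem kern_tendsto_left
    (hv2 : Tendsto v atTop (𝓝 (e1 : EuclideanSpace ℂ (Fin (n + 1)))))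
    (hv4 : Tendsto (fun k => φ (v k)) atTop (𝓝 (e1 : EuclideanSpace ℂ (Fin (m + 1)))))
    {z : EuclideanSpace ℂ (Fin (n + 1))}
    (hz : z ∈ ball (0 : EuclideanSpace ℂ (Fin (n + 1))) 1) :
    Tendsto (fun k => kern φ z (v k)) atTop (𝓝 (conj (hq φ z))) := by
  have hden_ne : (1 : ℂ) - conj (z 0) ≠ 0 := by
    intro h
    apply ball_coord_ne_one hz
    have h1 : conj (z 0) = 1 := (sub_eq_zero.mp h).symm
    have h2 : z 0 = 1 := by
      have := congrArg conj h1
      simpa using this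
    rw [h2]; ring
  have hnum : Tendsto (fun k => (1 : ℂ) - ⟪φ z, φ (v k)⟫) atTop (𝓝 (1 - conj (φ z 0))) := by
    have h1 : Tendsto (fun k => ⟪φ z, φ (v k)⟫) atTop
        (𝓝 ⟪φ z, (e1 : EuclideanSpace ℂ (Fin (m + 1)))⟫) := tendsto_const_nhds.inner hv4
    rw [inner_e1_right] at h1
    exact tendsto_const_nhds.sub h1
  have hden : Tendsto (fun k => (1 : ℂ) - ⟪z, v k⟫) atTop (𝓝 (1 - conj (z 0))) := by
    have h1 : Tendsto (fun k => ⟪z, v k⟫) atTop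
        (𝓝 ⟪z, (e1 : EuclideanSpace ℂ (Fin (n + 1)))⟫) := tendsto_const_nhds.inner hv2
    rw [inner_e1_right] at h1
    exact tendsto_const_nhds.sub h1
  rw [conj_hq]
  exact hnum.div hden hden_ne

theorem kern_tendsto_right
    (hv2 : Tendsto v atTop (𝓝 (e1 : EuclideanSpace ℂ (Fin (n + 1)))))
    (hv4 : Tendsto (fun k => φ (v k)) atTop (𝓝 (e1 : EuclideanSpace ℂ (Fin (m + 1)))))
    {z : EuclideanSpace ℂ (Fin (n + 1))}
    (hz : z ∈ ball (0 : EuclideanSpace ℂ (Fin (n + 1))) 1) :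
    Tendsto (fun k => kern φ (v k) z) atTop (𝓝 (hq φ z)) := by
  have hden_ne : (1 : ℂ) - z 0 ≠ 0 := ball_coord_ne_one hz
  have hnum : Tendsto (fun k => (1 : ℂ) - ⟪φ (v k), φ z⟫) atTop (𝓝 (1 - φ z 0)) := by
    have h1 : Tendsto (fun k => ⟪φ (v k), φ z⟫) atTop
        (𝓝 ⟪(e1 : EuclideanSpace ℂ (Fin (m + 1))), φ z⟫) := hv4.inner tendsto_const_nhds
    rw [inner_e1_left] at h1
    exact tendsto_const_nhds.sub h1
  have hden : Tendsto (fun k => (1 : ℂ) - ⟪v k, z⟫) atTop (𝓝 (1 - z 0)) := by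
    have h1 : Tendsto (fun k => ⟪v k, z⟫) atTop
        (𝓝 ⟪(e1 : EuclideanSpace ℂ (Fin (n + 1))), z⟫) := hv2.inner tendsto_const_nhds
    rw [inner_e1_left] at h1
    exact tendsto_const_nhds.sub h1
  exact hnum.div hden hden_ne

theorem julia_ineq
    (hpsd : SchurAglerKernelPos φ)
    (hv2 : Tendsto v atTop (𝓝 (e1 : EuclideanSpace ℂ (Fin (n + 1)))))
    (hv4 : Tendsto (fun k => φ (v k)) atTop (𝓝 (e1 : EuclideanSpace ℂ (Fin (m + 1)))))
    (hv1 : ∀ k, v k ∈ ball (0 : EuclideanSpace ℂ (Fin (n + 1))) 1)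
    (hv3 : Tendsto (fun k => fq φ (v k)) atTop (𝓝 L))
    {z : EuclideanSpace ℂ (Fin (n + 1))}
    (hz : z ∈ ball (0 : EuclideanSpace ℂ (Fin (n + 1))) 1) :
    Complex.abs (hq φ z) ^ 2 ≤ L * fq φ z := by
  have hineq : ∀ k, Complex.abs (kern φ z (v k)) ^ 2 ≤ fq φ (v k) * fq φ z := fun k =>
    two_point hpsd (hv1 k) hz
  have hlhs : Tendsto (fun k => Complex.abs (kern φ z (v k)) ^ 2) atTop
      (𝓝 (Complex.abs (conj (hq φ z)) ^ 2)) :=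
    ((Complex.continuous_abs.tendsto _).comp (kern_tendsto_left hv2 hv4 hz)).pow 2
  have hrhs : Tendsto (fun k => fq φ (v k) * fq φ z) atTop (𝓝 (L * fq φ z)) :=
    hv3.mul tendsto_const_nhds
  have := le_of_tendsto_of_tendsto' hlhs hrhs hineq
  rwa [Complex.abs_conj] at this

theorem star_ineq
    (hpsd : SchurAglerKernelPos φ)
    (hv2 : Tendsto v atTop (𝓝 (e1 : EuclideanSpace ℂ (Fin (n + 1)))))
    (hv4 : Tendsto (fun k => φ (v k)) atTop (𝓝 (e1 : EuclideanSpace ℂ (Fin (m + 1)))))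
    (hv1 : ∀ k, v k ∈ ball (0 : EuclideanSpace ℂ (Fin (n + 1))) 1)
    (hv3 : Tendsto (fun k => fq φ (v k)) atTop (𝓝 L))
    {z w : EuclideanSpace ℂ (Fin (n + 1))}
    (hz : z ∈ ball (0 : EuclideanSpace ℂ (Fin (n + 1))) 1)
    (hw : w ∈ ball (0 : EuclideanSpace ℂ (Fin (n + 1))) 1) :
    Complex.abs (hq φ z - kern φ w z) ^ 2 ≤ (L - 2 * (hq φ w).re + fq φ w) * fq φ z := by
  have hineq : ∀ k, Complex.abs (kern φ z (v k) - kern φ z w) ^ 2 ≤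
      (fq φ (v k) - (kern φ w (v k)).re - (kern φ (v k) w).re + fq φ w) * fq φ z := fun k =>
    three_point hpsd (hv1 k) hw hz
  have hlhs : Tendsto (fun k => Complex.abs (kern φ z (v k) - kern φ z w) ^ 2) atTop
      (𝓝 (Complex.abs (conj (hq φ z) - kern φ z w) ^ 2)) :=
    ((Complex.continuous_abs.tendsto _).comp
      ((kern_tendsto_left hv2 hv4 hz).sub tendsto_const_nhds)).pow 2
  have hre1 : Tendsto (fun k => (kern φ w (v k)).re) atTop (𝓝 ((conj (hq φ w)).re)) :=
    (Complex.continuous_re.tendsto _).comp (kern_tendsto_left hv2 hv4 hw)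
  have hre2 : Tendsto (fun k => (kern φ (v k) w).re) atTop (𝓝 ((hq φ w).re)) :=
    (Complex.continuous_re.tendsto _).comp (kern_tendsto_right hv2 hv4 hw)
  have hrhs : Tendsto
      (fun k => (fq φ (v k) - (kern φ w (v k)).re - (kern φ (v k) w).re + fq φ w) * fq φ z)
      atTop (𝓝 ((L - (conj (hq φ w)).re - (hq φ w).re + fq φ w) * fq φ z)) :=
    (((hv3.sub hre1).sub hre2).add tendsto_const_nhds).mul tendsto_const_nhds
  have h := le_of_tendsto_of_tendsto' hlhs hrhs hineq
  have he1 : Complex.abs (conj (hq φ z) - kern φ z w) = Complex.abs (hq φ z - kern φ w z) := by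
    have h2 : kern φ z w = conj (kern φ w z) := (conj_kern φ w z).symm
    rw [h2, ← map_sub, Complex.abs_conj]
  have he2 : (conj (hq φ w)).re = (hq φ w).re := Complex.conj_re _
  rw [he1, he2] at h
  have he3 : L - (hq φ w).re - (hq φ w).re + fq φ w = L - 2 * (hq φ w).re + fq φ w := by ring
  rwa [he3] at h

theorem eventually_lower {X : Type*} [MetricSpace X] {s : Set X} {a : X} {g : X → ℝ} {L : ℝ}
    (hnn : ∀ z ∈ s, 0 ≤ g z)
    (hL : Filter.liminf g (𝓝[s] a) = L) {ε : ℝ} (hε : 0 < ε) :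
    ∀ᶠ z in 𝓝[s] a, L - ε < g z :=
  eventually_lt_of_lt_liminf (by rw [hL]; linarith)
    ⟨0, eventually_map.2 (eventually_mem_nhdsWithin.mono hnn)⟩

theorem hq_factor {z : EuclideanSpace ℂ (Fin (n + 1))}
    (hz : z ∈ ball (0 : EuclideanSpace ℂ (Fin (n + 1))) 1) :
    (1 : ℂ) - φ z 0 = hq φ z * (1 - z 0) := by
  rw [hq, div_mul_cancel₀ _ (ball_coord_ne_one hz)]

theorem num_bound
    (hφmap : ∀ z ∈ ball (0 : EuclideanSpace ℂ (Fin (n + 1))) 1,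
      φ z ∈ ball (0 : EuclideanSpace ℂ (Fin (m + 1))) 1)
    {z : EuclideanSpace ℂ (Fin (n + 1))}
    (hz : z ∈ ball (0 : EuclideanSpace ℂ (Fin (n + 1))) 1) :
    1 - ‖φ z‖ ^ 2 ≤ 2 * Complex.abs (1 - φ z 0) := by
  have hφz := hφmap z hz
  have hA : Complex.abs (φ z 0) ≤ ‖φ z‖ := abs_coord_le_norm _ _
  have hA1 : Complex.abs (φ z 0) < 1 := lt_of_le_of_lt hA (ball_norm_lt hφz)
  have htri : 1 - Complex.abs (φ z 0) ≤ Complex.abs (1 - φ z 0) := by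
    have h2 := Complex.abs.add_le (1 - φ z 0) (φ z 0)
    rw [sub_add_cancel] at h2
    simp only [map_one] at h2
    linarith
  nlinarith [Complex.abs.nonneg (φ z 0), Complex.abs.nonneg (1 - φ z 0)]

theorem region_bounds
    (hφmap : ∀ z ∈ ball (0 : EuclideanSpace ℂ (Fin (n + 1))) 1,
      φ z ∈ ball (0 : EuclideanSpace ℂ (Fin (m + 1))) 1)
    (hjulia : ∀ z ∈ ball (0 : EuclideanSpace ℂ (Fin (n + 1))) 1,
      Complex.abs (hq φ z) ^ 2 ≤ L * fq φ z)
    (hL0 : 0 ≤ L) {α : ℝ} (hα : 0 < α) {z : EuclideanSpace ℂ (Fin (n + 1))}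
    (hz : z ∈ Koranyi α (e1 : EuclideanSpace ℂ (Fin (n + 1)))) :
    fq φ z ≤ α * Complex.abs (hq φ z) ∧ Complex.abs (hq φ z) ≤ α * L ∧ fq φ z ≤ α ^ 2 * L := by
  obtain ⟨hzb, hzk⟩ := hz
  rw [inner_e1_left] at hzk
  have hs : 0 < 1 - ‖z‖ ^ 2 := ball_pos hzb
  have hnum := num_bound hφmap hzb
  have hfac : Complex.abs (1 - φ z 0) = Complex.abs (hq φ z) * Complex.abs (1 - z 0) := by
    rw [hq_factor hzb, map_mul]
  have hH0 : 0 ≤ Complex.abs (hq φ z) := Complex.abs.nonneg _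
  have h1 : fq φ z ≤ α * Complex.abs (hq φ z) := by
    have hchain : 1 - ‖φ z‖ ^ 2 ≤ α * Complex.abs (hq φ z) * (1 - ‖z‖ ^ 2) := by
      calc 1 - ‖φ z‖ ^ 2 ≤ 2 * Complex.abs (1 - φ z 0) := hnum
        _ = 2 * Complex.abs (hq φ z) * Complex.abs (1 - z 0) := by rw [hfac]; ring
        _ ≤ 2 * Complex.abs (hq φ z) * (α / 2 * (1 - ‖z‖ ^ 2)) := by
            apply mul_le_mul_of_nonneg_left hzk
            positivity
        _ = α * Complex.abs (hq φ z) * (1 - ‖z‖ ^ 2) := by ring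
    rw [fq, div_le_iff₀ hs]
    exact hchain
  have h2 : Complex.abs (hq φ z) ≤ α * L := by
    have hj := hjulia z hzb
    rcases eq_or_lt_of_le hH0 with hH | hH
    · rw [← hH]; positivity
    · have : Complex.abs (hq φ z) ^ 2 ≤ L * (α * Complex.abs (hq φ z)) :=
        le_trans hj (mul_le_mul_of_nonneg_left h1 hL0)
      nlinarith [this, hH]
  refine ⟨h1, h2, ?_⟩
  calc fq φ z ≤ α * Complex.abs (hq φ z) := h1
    _ ≤ α * (α * L) := mul_le_mul_of_nonneg_left h2 (le_of_lt hα)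
    _ = α ^ 2 * L := by ring

theorem arith_radial {L ε t a b A F : ℝ} (hL0 : 0 ≤ L) (hε : 0 < ε) (hε1 : ε ≤ 1)
    (ht0 : 0 < t) (ht1 : t < 1) (htε : 1 - ε < t)
    (hA0 : 0 ≤ A) (hF0 : 0 ≤ F) (hA2 : A ^ 2 = a ^ 2 + b ^ 2) (f3 : a ≤ A)
    (f1 : A ^ 2 ≤ L * F) (f2 : (1 + t) * F ≤ 2 * a) (hF : L - ε < F) :
    (a - L) ^ 2 + b ^ 2 ≤ (4 * L ^ 2 + 2 * L + 1) * ε ∧ |F - L| ≤ (3 * L + 1) * ε := by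
  have f4 : A * (1 + t) ≤ 2 * L := by
    rcases eq_or_lt_of_le hA0 with hA | hA
    · rw [← hA]
      nlinarith [ht0, hL0]
    · have h7 : A ^ 2 * (1 + t) ≤ 2 * A * L := by
        calc A ^ 2 * (1 + t) ≤ (L * F) * (1 + t) := by nlinarith [f1, ht0]
          _ = L * ((1 + t) * F) := by ring
          _ ≤ L * (2 * a) := mul_le_mul_of_nonneg_left f2 hL0
          _ ≤ 2 * A * L := by nlinarith [f3, hL0]
      nlinarith [h7, hA]
  have g1 : A * (2 - ε) ≤ 2 * L := by nlinarith [f4, htε, hA0]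
  have hLε1 : 0 ≤ L * ε * (1 - ε) := by
    apply mul_nonneg (mul_nonneg hL0 hε.le)
    linarith
  have g2 : A ≤ L * (1 + ε) := by nlinarith [g1, hε, hε1, hL0, hA0, hLε1]
  have g3 : L - (L / 2 + 1) * ε ≤ a := by
    have h8 : (1 + t) * (L - ε) ≤ 2 * a := by
      rcases le_or_gt 0 (L - ε) with hLε | hLε
      · nlinarith [f2, hF, ht0, hLε]
      · nlinarith [f2, hF, ht0, ht1, hLε]
    rcases le_or_gt 0 (L - ε) with hLε | hLε
    · nlinarith [h8, htε, hLε, hε1]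
    · nlinarith [h8, ht1, hLε, hε1, hε]
  constructor
  · have hident : (a - L) ^ 2 + b ^ 2 = A ^ 2 - 2 * a * L + L ^ 2 := by
      rw [hA2]; ring
    rw [hident]
    have hεsq : ε ^ 2 ≤ ε := by nlinarith [hε, hε1]
    have hA_sq : A ^ 2 ≤ L ^ 2 + 2 * L ^ 2 * ε + L ^ 2 * ε ^ 2 := by nlinarith [g2, hA0]
    have haL : 2 * L ^ 2 - (L ^ 2 + 2 * L) * ε ≤ 2 * a * L := by nlinarith [g3, hL0]
    have hLsq : L ^ 2 * ε ^ 2 ≤ L ^ 2 * ε := mul_le_mul_of_nonneg_left hεsq (sq_nonneg L)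
    linarith [hA_sq, haL, hLsq, hε.le]
  · have hFup : F ≤ L + 3 * L * ε := by
      have hFA : F * (2 - ε) ≤ 2 * A := by
        have h10 : F * (1 + t) ≤ 2 * A := by linarith [f2, f3]
        have h11 : 0 ≤ F * (t - 1 + ε) := mul_nonneg hF0 (by linarith)
        linarith [h10, h11]
      have h9 : F * (2 - ε) ≤ 2 * L * (1 + ε) := by linarith [hFA, g2]
      have h2ε : (0:ℝ) < 2 - ε := by linarith
      nlinarith [h9, hLε1, h2ε]
    rw [abs_le]
    constructor
    · nlinarith [hF, hL0, hε]
    · nlinarith [hFup, hL0, hε]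

theorem radial_estimates
    (hφmap : ∀ z ∈ ball (0 : EuclideanSpace ℂ (Fin (n + 1))) 1,
      φ z ∈ ball (0 : EuclideanSpace ℂ (Fin (m + 1))) 1)
    (hjulia : ∀ z ∈ ball (0 : EuclideanSpace ℂ (Fin (n + 1))) 1,
      Complex.abs (hq φ z) ^ 2 ≤ L * fq φ z)
    (hL0 : 0 ≤ L) {t : ℝ} (ht : t ∈ Set.Ioo (0:ℝ) 1) {ε : ℝ} (hε : 0 < ε) (hε1 : ε ≤ 1)
    (htε : 1 - ε < t)
    (hF : L - ε < fq φ (rad t)) :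
    Complex.abs (hq φ (rad t) - (L:ℂ)) ^ 2 ≤ (4 * L ^ 2 + 2 * L + 1) * ε ∧
      |fq φ (rad t) - L| ≤ (3 * L + 1) * ε := by
  set z : EuclideanSpace ℂ (Fin (n + 1)) := rad t with hz_def
  have hzb : z ∈ ball (0 : EuclideanSpace ℂ (Fin (n + 1))) 1 :=
    rad_mem_ball ⟨by linarith [ht.1], ht.2⟩
  set a : ℝ := (hq φ z).re with ha_def
  set b : ℝ := (hq φ z).im with hb_def
  set A : ℝ := Complex.abs (hq φ z) with hA_def
  set F : ℝ := fq φ z with hF_def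
  have hA0 : 0 ≤ A := Complex.abs.nonneg _
  have hF0 : 0 ≤ F := fq_nonneg hzb (hφmap z hzb)
  have hA2 : A ^ 2 = a ^ 2 + b ^ 2 := by
    rw [hA_def, Complex.sq_abs, Complex.normSq_apply, ha_def, hb_def]
    ring
  have f3 : a ≤ A := Complex.re_le_abs _
  have f1 : A ^ 2 ≤ L * F := hjulia z hzb
  have ht2 : (0:ℝ) < 1 - t ^ 2 := by nlinarith [ht.1, ht.2]
  -- f2 : (1+t)*F ≤ 2*a
  have f2 : (1 + t) * F ≤ 2 * a := by
    have hz0 : z 0 = (t : ℂ) := rad_coord t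
    have hφ1 : φ z 0 = 1 - hq φ z * (((1 - t : ℝ)) : ℂ) := by
      have := hq_factor (φ := φ) hzb
      rw [hz0] at this
      have h2 : ((1 - t : ℝ) : ℂ) = 1 - (t:ℂ) := by push_cast; ring
      rw [h2]
      linear_combination -this
    have hre : (φ z 0).re = 1 - a * (1 - t) := by
      rw [hφ1]
      simp [Complex.sub_re, Complex.mul_re, Complex.ofReal_re, Complex.ofReal_im, ha_def]
    have him : (φ z 0).im = -b * (1 - t) := by
      rw [hφ1]
      simp [Complex.sub_im, Complex.mul_im, Complex.ofReal_re, Complex.ofReal_im, hb_def]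
    have hcoord : Complex.abs (φ z 0) ^ 2 ≤ ‖φ z‖ ^ 2 := by
      have := abs_coord_le_norm (φ z) 0
      nlinarith [Complex.abs.nonneg (φ z 0)]
    have hsq : Complex.abs (φ z 0) ^ 2 = (1 - a * (1 - t)) ^ 2 + (b * (1 - t)) ^ 2 := by
      rw [Complex.sq_abs, Complex.normSq_apply, hre, him]
      ring
    have hup : 1 - ‖φ z‖ ^ 2 ≤ 2 * a * (1 - t) - (a ^ 2 + b ^ 2) * (1 - t) ^ 2 := by
      rw [hsq] at hcoord
      nlinarith [hcoord]
    have hFt : F * (1 - t ^ 2) = 1 - ‖φ z‖ ^ 2 := by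
      rw [hF_def, fq]
      have hnz : ‖z‖ = |t| := norm_rad t
      rw [hnz, sq_abs]
      field_simp
    have h6 : F * (1 - t ^ 2) ≤ 2 * a * (1 - t) := by
      rw [hFt]
      nlinarith [hup, sq_nonneg ((1 - t) * a), sq_nonneg ((1-t) * b)]
    have ht1 : (0:ℝ) < 1 - t := by linarith [ht.2]
    nlinarith [h6, ht1]
  have hgoal : Complex.abs (hq φ z - (L:ℂ)) ^ 2 = (a - L) ^ 2 + b ^ 2 := by
    rw [Complex.sq_abs, Complex.normSq_apply]
    simp [Complex.sub_re, Complex.sub_im, Complex.ofReal_re, Complex.ofReal_im,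
      ha_def, hb_def]
    ring
  have hmain := arith_radial hL0 hε hε1 ht.1 ht.2 htε hA0 hF0 hA2 f3 f1 f2 hF
  exact ⟨by rw [hgoal]; exact hmain.1, hmain.2⟩

theorem radial_tendsto
    (hφmap : ∀ z ∈ ball (0 : EuclideanSpace ℂ (Fin (n + 1))) 1,
      φ z ∈ ball (0 : EuclideanSpace ℂ (Fin (m + 1))) 1)
    (hjulia : ∀ z ∈ ball (0 : EuclideanSpace ℂ (Fin (n + 1))) 1,
      Complex.abs (hq φ z) ^ 2 ≤ L * fq φ z)
    (hL0 : 0 ≤ L)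
    (hlow : ∀ ε : ℝ, 0 < ε → ∀ᶠ z in
      𝓝[ball (0 : EuclideanSpace ℂ (Fin (n + 1))) 1] (e1 : EuclideanSpace ℂ (Fin (n + 1))),
      L - ε < fq φ z) :
    Tendsto (fun t => hq φ (rad t)) (𝓝[Set.Iio (1:ℝ)] 1) (𝓝 (L:ℂ)) ∧
      Tendsto (fun t => fq φ (rad t)) (𝓝[Set.Iio (1:ℝ)] 1) (𝓝 L) := by
  have hEv : ∀ ε : ℝ, 0 < ε → ε ≤ 1 → ∀ᶠ t in 𝓝[Set.Iio (1:ℝ)] 1,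
      Complex.abs (hq φ (rad t) - (L:ℂ)) ^ 2 ≤ (4 * L ^ 2 + 2 * L + 1) * ε ∧
        |fq φ (rad t) - L| ≤ (3 * L + 1) * ε := by
    intro ε hε hε1
    have h2 : ∀ᶠ t in 𝓝[Set.Iio (1:ℝ)] 1, 1 - ε < t :=
      eventually_nhdsWithin_of_eventually_nhds (eventually_gt_nhds (by linarith))
    have h3 : ∀ᶠ t in 𝓝[Set.Iio (1:ℝ)] 1, L - ε < fq φ (rad t) :=
      tendsto_rad_ball.eventually (hlow ε hε)
    filter_upwards [eventually_Ioo, h2, h3] with t ht1 ht2 ht3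
    exact radial_estimates hφmap hjulia hL0 ht1 hε hε1 ht2 ht3
  have hKpos : (0:ℝ) < 4 * L ^ 2 + 2 * L + 1 := by nlinarith [hL0, sq_nonneg L]
  have hK2pos : (0:ℝ) < 3 * L + 1 := by linarith
  constructor
  · rw [Metric.tendsto_nhds]
    intro δ hδ
    have hεpos : 0 < min 1 (δ ^ 2 / (2 * (4 * L ^ 2 + 2 * L + 1))) := by positivity
    filter_upwards [hEv _ hεpos (min_le_left _ _)] with t ht
    rw [Complex.dist_eq]
    have h4 : Complex.abs (hq φ (rad t) - (L:ℂ)) ^ 2 < δ ^ 2 := by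
      calc Complex.abs (hq φ (rad t) - (L:ℂ)) ^ 2
          ≤ (4 * L ^ 2 + 2 * L + 1) * min 1 (δ ^ 2 / (2 * (4 * L ^ 2 + 2 * L + 1))) := ht.1
        _ ≤ (4 * L ^ 2 + 2 * L + 1) * (δ ^ 2 / (2 * (4 * L ^ 2 + 2 * L + 1))) :=
            mul_le_mul_of_nonneg_left (min_le_right _ _) (le_of_lt hKpos)
        _ = δ ^ 2 / 2 := by field_simp
        _ < δ ^ 2 := by nlinarith [hδ]
    nlinarith [h4, Complex.abs.nonneg (hq φ (rad t) - (L:ℂ)), hδ, Complex.norm_eq_abs (hq φ (rad t) - (L:ℂ))]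
  · rw [Metric.tendsto_nhds]
    intro δ hδ
    have hεpos : 0 < min 1 (δ / (2 * (3 * L + 1))) := by positivity
    filter_upwards [hEv _ hεpos (min_le_left _ _)] with t ht
    rw [Real.dist_eq]
    calc |fq φ (rad t) - L| ≤ (3 * L + 1) * min 1 (δ / (2 * (3 * L + 1))) := ht.2
      _ ≤ (3 * L + 1) * (δ / (2 * (3 * L + 1))) :=
          mul_le_mul_of_nonneg_left (min_le_right _ _) (le_of_lt hK2pos)
      _ = δ / 2 := by field_simp
      _ < δ := by linarith

theorem hq_klimit
    (hφmap : ∀ z ∈ ball (0 : EuclideanSpace ℂ (Fin (n + 1))) 1,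
      φ z ∈ ball (0 : EuclideanSpace ℂ (Fin (m + 1))) 1)
    (hpsd : SchurAglerKernelPos φ)
    (hv1 : ∀ k, v k ∈ ball (0 : EuclideanSpace ℂ (Fin (n + 1))) 1)
    (hv2 : Tendsto v atTop (𝓝 (e1 : EuclideanSpace ℂ (Fin (n + 1)))))
    (hv3 : Tendsto (fun k => fq φ (v k)) atTop (𝓝 L))
    (hv4 : Tendsto (fun k => φ (v k)) atTop (𝓝 (e1 : EuclideanSpace ℂ (Fin (m + 1)))))
    (hjulia : ∀ z ∈ ball (0 : EuclideanSpace ℂ (Fin (n + 1))) 1,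
      Complex.abs (hq φ z) ^ 2 ≤ L * fq φ z)
    (hL0 : 0 ≤ L)
    (hKlim : HasKLimit φ (e1 : EuclideanSpace ℂ (Fin (n + 1)))
      (e1 : EuclideanSpace ℂ (Fin (m + 1))))
    (hhrad : Tendsto (fun t => hq φ (rad t)) (𝓝[Set.Iio (1:ℝ)] 1) (𝓝 (L:ℂ)))
    (hfrad : Tendsto (fun t => fq φ (rad t)) (𝓝[Set.Iio (1:ℝ)] 1) (𝓝 L))
    {α : ℝ} (hα : 0 < α) :
    Tendsto (hq φ) (𝓝[Koranyi α (e1 : EuclideanSpace ℂ (Fin (n + 1)))] e1) (𝓝 (L:ℂ)) := by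
  rw [Metric.tendsto_nhds]
  intro δ hδ
  set M : ℝ := α ^ 2 * L with hM_def
  have hM0 : 0 ≤ M := by positivity
  -- choose a good radial point w = rad t
  have hB : Tendsto (fun t => L - 2 * (hq φ (rad t)).re + fq φ (rad t))
      (𝓝[Set.Iio (1:ℝ)] 1) (𝓝 0) := by
    have h1 : Tendsto (fun t => (hq φ (rad t)).re) (𝓝[Set.Iio (1:ℝ)] 1) (𝓝 L) := by
      have := (Complex.continuous_re.tendsto _).comp hhrad
      exact this
    have h2 := ((tendsto_const_nhds (x := L)).sub (h1.const_mul 2)).add hfrad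
    have h3 : L - 2 * L + L = 0 := by ring
    rw [h3] at h2
    exact h2.congr (fun t => by ring)
  have hBev : ∀ᶠ t in 𝓝[Set.Iio (1:ℝ)] 1,
      |L - 2 * (hq φ (rad t)).re + fq φ (rad t)| < δ ^ 2 / (9 * (M + 1)) := by
    have hpos : (0:ℝ) < δ ^ 2 / (9 * (M + 1)) := by positivity
    have := Metric.tendsto_nhds.mp hB _ hpos
    refine this.mono fun t ht => ?_
    rwa [Real.dist_eq, sub_zero] at ht
  have hhev : ∀ᶠ t in 𝓝[Set.Iio (1:ℝ)] 1,
      Complex.abs (hq φ (rad t) - (L:ℂ)) < δ / 3 := by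
    have := Metric.tendsto_nhds.mp hhrad _ (by positivity : (0:ℝ) < δ / 3)
    refine this.mono fun t ht => ?_
    rwa [Complex.dist_eq] at ht
  obtain ⟨t, ht1, ht2, ht3⟩ := (eventually_Ioo.and (hBev.and hhev)).exists
  set w : EuclideanSpace ℂ (Fin (n + 1)) := rad t with hw_def
  have hwb : w ∈ ball (0 : EuclideanSpace ℂ (Fin (n + 1))) 1 :=
    rad_mem_ball ⟨by linarith [ht1.1], ht1.2⟩
  have hφten : Tendsto φ (𝓝[Koranyi α (e1 : EuclideanSpace ℂ (Fin (n + 1)))] e1)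
      (𝓝 (e1 : EuclideanSpace ℂ (Fin (m + 1)))) := hKlim α hα
  have hzten : Tendsto (fun z => z)
      (𝓝[Koranyi α (e1 : EuclideanSpace ℂ (Fin (n + 1)))] e1)
      (𝓝 (e1 : EuclideanSpace ℂ (Fin (n + 1)))) := tendsto_id.mono_left nhdsWithin_le_nhds
  have hwden : (1:ℂ) - conj (w 0) ≠ 0 := by
    rw [hw_def, rad_coord, Complex.conj_ofReal]
    intro h
    have : (1:ℂ) - (t:ℂ) = ((1 - t : ℝ) : ℂ) := by push_cast; ring
    rw [this] at h
    have := Complex.ofReal_eq_zero.mp h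
    linarith [ht1.2]
  have hker : Tendsto (fun z => kern φ w z)
      (𝓝[Koranyi α (e1 : EuclideanSpace ℂ (Fin (n + 1)))] e1) (𝓝 (conj (hq φ w))) := by
    have hnum : Tendsto (fun z => (1:ℂ) - ⟪φ w, φ z⟫)
        (𝓝[Koranyi α (e1 : EuclideanSpace ℂ (Fin (n + 1)))] e1)
        (𝓝 (1 - conj (φ w 0))) := by
      have h1 : Tendsto (fun z => ⟪φ w, φ z⟫)
          (𝓝[Koranyi α (e1 : EuclideanSpace ℂ (Fin (n + 1)))] e1)
          (𝓝 ⟪φ w, (e1 : EuclideanSpace ℂ (Fin (m + 1)))⟫) :=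
        tendsto_const_nhds.inner hφten
      rw [inner_e1_right] at h1
      exact tendsto_const_nhds.sub h1
    have hden : Tendsto (fun z => (1:ℂ) - ⟪w, z⟫)
        (𝓝[Koranyi α (e1 : EuclideanSpace ℂ (Fin (n + 1)))] e1)
        (𝓝 (1 - conj (w 0))) := by
      have h1 : Tendsto (fun z => ⟪w, z⟫)
          (𝓝[Koranyi α (e1 : EuclideanSpace ℂ (Fin (n + 1)))] e1)
          (𝓝 ⟪w, (e1 : EuclideanSpace ℂ (Fin (n + 1)))⟫) :=
        tendsto_const_nhds.inner hzten
      rw [inner_e1_right] at h1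
      exact tendsto_const_nhds.sub h1
    rw [conj_hq]
    exact hnum.div hden hwden
  have hkev : ∀ᶠ z in 𝓝[Koranyi α (e1 : EuclideanSpace ℂ (Fin (n + 1)))] e1,
      Complex.abs (kern φ w z - conj (hq φ w)) < δ / 3 := by
    have := Metric.tendsto_nhds.mp hker _ (by positivity : (0:ℝ) < δ / 3)
    refine this.mono fun z hz => ?_
    rwa [Complex.dist_eq] at hz
  filter_upwards [hkev, self_mem_nhdsWithin] with z hz1 hz2
  rw [Complex.dist_eq]
  have hzb : z ∈ ball (0 : EuclideanSpace ℂ (Fin (n + 1))) 1 := hz2.1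
  have hrb := region_bounds hφmap hjulia hL0 hα hz2
  have hstar := star_ineq hpsd hv2 hv4 hv1 hv3 hzb hwb
  set Bt : ℝ := L - 2 * (hq φ w).re + fq φ w with hBt_def
  have hfqz : 0 ≤ fq φ z := fq_nonneg hzb (hφmap _ hzb)
  have h5 : Bt * fq φ z ≤ |Bt| * M := by
    calc Bt * fq φ z ≤ |Bt| * fq φ z :=
          mul_le_mul_of_nonneg_right (le_abs_self _) hfqz
      _ ≤ |Bt| * M := mul_le_mul_of_nonneg_left hrb.2.2 (abs_nonneg _)
  have h6 : Complex.abs (hq φ z - kern φ w z) ^ 2 < δ ^ 2 / 9 := by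
    have h61 : |Bt| * M ≤ (δ ^ 2 / (9 * (M + 1))) * M :=
      mul_le_mul_of_nonneg_right (le_of_lt ht2) hM0
    have h62 : (δ ^ 2 / (9 * (M + 1))) * M < δ ^ 2 / 9 := by
      rw [div_mul_eq_mul_div, div_lt_div_iff₀ (by positivity) (by norm_num)]
      nlinarith [hδ, hM0]
    calc Complex.abs (hq φ z - kern φ w z) ^ 2 ≤ Bt * fq φ z := hstar
      _ ≤ |Bt| * M := h5
      _ ≤ (δ ^ 2 / (9 * (M + 1))) * M := h61
      _ < δ ^ 2 / 9 := h62
  have h7 : Complex.abs (hq φ z - kern φ w z) < δ / 3 := by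
    nlinarith [h6, Complex.abs.nonneg (hq φ z - kern φ w z), hδ]
  have h8 : Complex.abs (conj (hq φ w) - (L:ℂ)) < δ / 3 := by
    have heq : conj (hq φ w) - (L:ℂ) = conj (hq φ w - (L:ℂ)) := by
      rw [map_sub, Complex.conj_ofReal]
    rw [heq, Complex.abs_conj]
    exact ht3
  calc Complex.abs (hq φ z - (L:ℂ))
      ≤ Complex.abs (hq φ z - kern φ w z) + Complex.abs (kern φ w z - (L:ℂ)) :=
        Complex.abs.sub_le _ _ _
    _ ≤ Complex.abs (hq φ z - kern φ w z) + (Complex.abs (kern φ w z - conj (hq φ w))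
        + Complex.abs (conj (hq φ w) - (L:ℂ))) := by
        have := Complex.abs.sub_le (kern φ w z) (conj (hq φ w)) ((L:ℂ))
        linarith
    _ < δ / 3 + (δ / 3 + δ / 3) := by
        apply add_lt_add h7
        exact add_lt_add hz1 h8
    _ = δ := by ring

theorem abs_sub_le_abs_add_abs (a b : ℂ) :
    Complex.abs (a - b) ≤ Complex.abs a + Complex.abs b := by
  simpa [Complex.norm_eq_abs] using norm_sub_le a b

theorem perturb {α : ℝ} (hα : 0 < α) {z : EuclideanSpace ℂ (Fin (n + 1))}
    (hz : z ∈ Koranyi α (e1 : EuclideanSpace ℂ (Fin (n + 1)))) {w : ℂ}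
    (hw : Complex.abs w ≤ 1 / (3 * (α + 1)) * Complex.abs (1 - z 0)) :
    (z + w • (e1 : EuclideanSpace ℂ (Fin (n + 1)))) ∈
        Koranyi (4 * α) (e1 : EuclideanSpace ℂ (Fin (n + 1))) ∧
      (z + w • (e1 : EuclideanSpace ℂ (Fin (n + 1)))) 0 = z 0 + w ∧
      dist (z + w • (e1 : EuclideanSpace ℂ (Fin (n + 1)))) (e1 : EuclideanSpace ℂ (Fin (n + 1)))
        ≤ 2 * dist z (e1 : EuclideanSpace ℂ (Fin (n + 1))) := by
  obtain ⟨hzb, hzk⟩ := hz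
  rw [inner_e1_left] at hzk
  have hs : 0 < 1 - ‖z‖ ^ 2 := ball_pos hzb
  have hz1 : ‖z‖ < 1 := ball_norm_lt hzb
  have hδ0 : (0:ℝ) < 1 / (3 * (α + 1)) := by positivity
  have hδ13 : 1 / (3 * (α + 1)) ≤ 1 / 3 := by
    rw [div_le_div_iff₀ (by positivity) (by norm_num)]
    linarith
  have habsz0 : Complex.abs (1 - z 0) ≤ 2 := by
    have h1 := abs_sub_le_abs_add_abs 1 (z 0)
    have h2 : Complex.abs (z 0) ≤ ‖z‖ := abs_coord_le_norm z 0
    simp only [map_one] at h1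
    linarith
  have hw0 : 0 ≤ Complex.abs w := Complex.abs.nonneg w
  have hw1 : Complex.abs w ≤ 1 := by
    calc Complex.abs w ≤ 1 / (3 * (α + 1)) * Complex.abs (1 - z 0) := hw
      _ ≤ (1/3) * 2 := by
          apply mul_le_mul hδ13 habsz0 (Complex.abs.nonneg _) (by norm_num)
      _ ≤ 1 := by norm_num
  have hw2 : 3 * Complex.abs w ≤ (1 - ‖z‖ ^ 2) / 2 := by
    have h3 : Complex.abs w ≤ 1 / (3 * (α + 1)) * (α / 2 * (1 - ‖z‖ ^ 2)) := by
      calc Complex.abs w ≤ 1 / (3 * (α + 1)) * Complex.abs (1 - z 0) := hw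
        _ ≤ 1 / (3 * (α + 1)) * (α / 2 * (1 - ‖z‖ ^ 2)) :=
            mul_le_mul_of_nonneg_left hzk (le_of_lt hδ0)
    have h4 : 1 / (3 * (α + 1)) * (α / 2 * (1 - ‖z‖ ^ 2)) ≤ (1 - ‖z‖ ^ 2) / 6 := by
      rw [div_mul_eq_mul_div, one_mul, div_le_div_iff₀ (by positivity) (by norm_num)]
      nlinarith [hs, hα]
    linarith
  have hnorm_le : ‖z + w • (e1 : EuclideanSpace ℂ (Fin (n + 1)))‖ ≤ ‖z‖ + Complex.abs w := by
    calc ‖z + w • (e1 : EuclideanSpace ℂ (Fin (n + 1)))‖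
        ≤ ‖z‖ + ‖w • (e1 : EuclideanSpace ℂ (Fin (n + 1)))‖ := norm_add_le _ _
      _ = ‖z‖ + Complex.abs w := by rw [norm_smul, norm_e1, Complex.norm_eq_abs, mul_one]
  have hsq : ‖z + w • (e1 : EuclideanSpace ℂ (Fin (n + 1)))‖ ^ 2 ≤
      ‖z‖ ^ 2 + 3 * Complex.abs w := by
    have h5 : ‖z + w • (e1 : EuclideanSpace ℂ (Fin (n + 1)))‖ ^ 2 ≤
        (‖z‖ + Complex.abs w) ^ 2 := by
      apply sq_le_sq' _ hnorm_le
      have := norm_nonneg (z + w • (e1 : EuclideanSpace ℂ (Fin (n + 1))))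
      nlinarith [hw0, norm_nonneg z]
    nlinarith [h5, hw0, hw1, hz1, norm_nonneg z]
  have hkey : (1 - ‖z‖ ^ 2) / 2 ≤ 1 - ‖z + w • (e1 : EuclideanSpace ℂ (Fin (n + 1)))‖ ^ 2 := by
    nlinarith [hsq, hw2]
  have hball : z + w • (e1 : EuclideanSpace ℂ (Fin (n + 1))) ∈
      ball (0 : EuclideanSpace ℂ (Fin (n + 1))) 1 := by
    rw [mem_ball_zero_iff]
    nlinarith [hkey, hs, norm_nonneg (z + w • (e1 : EuclideanSpace ℂ (Fin (n + 1))))]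
  have hcoord : (z + w • (e1 : EuclideanSpace ℂ (Fin (n + 1)))) 0 = z 0 + w := by
    simp [e1, EuclideanSpace.single_apply]
  refine ⟨⟨hball, ?_⟩, hcoord, ?_⟩
  · rw [inner_e1_left, hcoord]
    have h6 : Complex.abs (1 - (z 0 + w)) ≤ Complex.abs (1 - z 0) + Complex.abs w := by
      have : (1 : ℂ) - (z 0 + w) = (1 - z 0) - w := by ring
      rw [this]
      exact abs_sub_le_abs_add_abs _ _
    have h7 : Complex.abs (1 - z 0) + Complex.abs w ≤ (1 + 1/3) * (α / 2 * (1 - ‖z‖ ^ 2)) := by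
      have h8 : Complex.abs w ≤ (1/3) * (α / 2 * (1 - ‖z‖ ^ 2)) := by
        calc Complex.abs w ≤ 1 / (3 * (α + 1)) * Complex.abs (1 - z 0) := hw
          _ ≤ (1/3) * Complex.abs (1 - z 0) :=
              mul_le_mul_of_nonneg_right hδ13 (Complex.abs.nonneg _)
          _ ≤ (1/3) * (α / 2 * (1 - ‖z‖ ^ 2)) := by
              apply mul_le_mul_of_nonneg_left hzk
              norm_num
      linarith [hzk, Complex.norm_eq_abs (1 - z 0)]
    calc Complex.abs (1 - (z 0 + w)) ≤ (1 + 1/3) * (α / 2 * (1 - ‖z‖ ^ 2)) := by linarith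
      _ ≤ 4 * α / 2 * (1 - ‖z + w • (e1 : EuclideanSpace ℂ (Fin (n + 1)))‖ ^ 2) := by
          nlinarith [hkey, hα, hs]
  · have h9 : dist (z + w • (e1 : EuclideanSpace ℂ (Fin (n + 1))))
        (e1 : EuclideanSpace ℂ (Fin (n + 1))) ≤
        dist z (e1 : EuclideanSpace ℂ (Fin (n + 1))) + Complex.abs w := by
      rw [dist_eq_norm, dist_eq_norm]
      calc ‖z + w • (e1 : EuclideanSpace ℂ (Fin (n + 1))) - e1‖
          = ‖(z - e1) + w • (e1 : EuclideanSpace ℂ (Fin (n + 1)))‖ := by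
            congr 1
            abel
        _ ≤ ‖z - e1‖ + ‖w • (e1 : EuclideanSpace ℂ (Fin (n + 1)))‖ := norm_add_le _ _
        _ = ‖z - e1‖ + Complex.abs w := by rw [norm_smul, norm_e1, Complex.norm_eq_abs, mul_one]
    have h10 : Complex.abs (1 - z 0) ≤ dist z (e1 : EuclideanSpace ℂ (Fin (n + 1))) := by
      have h11 : (1 : ℂ) - z 0 = ((e1 : EuclideanSpace ℂ (Fin (n + 1))) - z) 0 := by
        simp [e1, EuclideanSpace.single_apply]
      rw [h11]
      calc Complex.abs (((e1 : EuclideanSpace ℂ (Fin (n + 1))) - z) 0)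
          ≤ ‖(e1 : EuclideanSpace ℂ (Fin (n + 1))) - z‖ := abs_coord_le_norm _ 0
        _ = dist z (e1 : EuclideanSpace ℂ (Fin (n + 1))) := by
            rw [dist_eq_norm, norm_sub_rev]
    have h12 : Complex.abs w ≤ dist z (e1 : EuclideanSpace ℂ (Fin (n + 1))) := by
      calc Complex.abs w ≤ 1 / (3 * (α + 1)) * Complex.abs (1 - z 0) := hw
        _ ≤ 1 * Complex.abs (1 - z 0) := by
            apply mul_le_mul_of_nonneg_right _ (Complex.abs.nonneg _)
            calc 1 / (3 * (α + 1)) ≤ 1/3 := hδ13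
              _ ≤ 1 := by norm_num
        _ = Complex.abs (1 - z 0) := one_mul _
        _ ≤ dist z (e1 : EuclideanSpace ℂ (Fin (n + 1))) := h10
    linarith [h9, h12]

theorem coord_diffAt
    (hφhol : DifferentiableOn ℂ φ (ball (0 : EuclideanSpace ℂ (Fin (n + 1))) 1))
    {z : EuclideanSpace ℂ (Fin (n + 1))}
    (hz : z ∈ ball (0 : EuclideanSpace ℂ (Fin (n + 1))) 1) :
    DifferentiableAt ℂ (fun x => (φ x 0 : ℂ)) z := by
  have hφz : DifferentiableAt ℂ φ z := hφhol.differentiableAt (isOpen_ball.mem_nhds hz)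
  have h1 := ((EuclideanSpace.proj (0 : Fin (m + 1))).differentiableAt (x := φ z)).comp z hφz
  exact h1

theorem deriv_klimit
    (hφmap : ∀ z ∈ ball (0 : EuclideanSpace ℂ (Fin (n + 1))) 1,
      φ z ∈ ball (0 : EuclideanSpace ℂ (Fin (m + 1))) 1)
    (hφhol : DifferentiableOn ℂ φ (ball (0 : EuclideanSpace ℂ (Fin (n + 1))) 1))
    (hhk : ∀ β : ℝ, 0 < β →
      Tendsto (hq φ) (𝓝[Koranyi β (e1 : EuclideanSpace ℂ (Fin (n + 1)))] e1) (𝓝 (L:ℂ)))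
    {α : ℝ} (hα : 0 < α) :
    Tendsto (fun z => fderiv ℂ (fun x => (φ x 0 : ℂ)) z (e1 : EuclideanSpace ℂ (Fin (n + 1))))
      (𝓝[Koranyi α (e1 : EuclideanSpace ℂ (Fin (n + 1)))] e1) (𝓝 (L:ℂ)) := by
  set δ0 : ℝ := 1 / (3 * (α + 1)) with hδ0_def
  have hδ0 : 0 < δ0 := by positivity
  rw [Metric.tendsto_nhds]
  intro δ hδ
  set C : ℝ := 1 + 9 * (α + 1) with hC_def
  have hC : 0 < C := by positivity
  set ε' : ℝ := δ / (2 * C) with hε'_def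
  have hε' : 0 < ε' := by positivity
  obtain ⟨ρ₁, hρ₁, hρ₁p⟩ := Metric.tendsto_nhdsWithin_nhds.mp (hhk (4 * α) (by linarith)) ε' hε'
  obtain ⟨ρ₂, hρ₂, hρ₂p⟩ := Metric.tendsto_nhdsWithin_nhds.mp (hhk α hα) ε' hε'
  have hclose : ∀ᶠ z in 𝓝[Koranyi α (e1 : EuclideanSpace ℂ (Fin (n + 1)))] e1,
      dist z (e1 : EuclideanSpace ℂ (Fin (n + 1))) < min (ρ₁ / 2) ρ₂ := by
    apply eventually_nhdsWithin_of_eventually_nhds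
    have hr : (0:ℝ) < min (ρ₁ / 2) ρ₂ := lt_min (by linarith) hρ₂
    have := Metric.ball_mem_nhds (e1 : EuclideanSpace ℂ (Fin (n + 1))) hr
    filter_upwards [this] with x hx
    rwa [mem_ball] at hx
  filter_upwards [self_mem_nhdsWithin, hclose] with z hzK hzclose
  have hzb : z ∈ ball (0 : EuclideanSpace ℂ (Fin (n + 1))) 1 := hzK.1
  have hz0 : (1:ℂ) - z 0 ≠ 0 := ball_coord_ne_one hzb
  have habs0 : 0 < Complex.abs (1 - z 0) := Complex.abs.pos hz0
  set R : ℝ := δ0 * Complex.abs (1 - z 0) with hR_def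
  have hR : 0 < R := by positivity
  set A : ℂ → EuclideanSpace ℂ (Fin (n + 1)) :=
    fun lam => z + (lam - z 0) • (e1 : EuclideanSpace ℂ (Fin (n + 1))) with hA_def
  have hA0 : A (z 0) = z := by
    rw [hA_def]
    simp
  have hAcoord : ∀ lam : ℂ, (A lam) 0 = lam := by
    intro lam
    rw [hA_def]
    simp [e1, EuclideanSpace.single_apply]
  have hmem : ∀ lam ∈ ball (z 0) R,
      A lam ∈ Koranyi (4 * α) (e1 : EuclideanSpace ℂ (Fin (n + 1))) ∧
      dist (A lam) (e1 : EuclideanSpace ℂ (Fin (n + 1))) ≤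
        2 * dist z (e1 : EuclideanSpace ℂ (Fin (n + 1))) := by
    intro lam hlam
    rw [mem_ball, Complex.dist_eq] at hlam
    have hwle : Complex.abs (lam - z 0) ≤ δ0 * Complex.abs (1 - z 0) := le_of_lt hlam
    have hp := perturb hα hzK (w := lam - z 0) (by rw [← hδ0_def]; exact hwle)
    exact ⟨hp.1, hp.2.2⟩
  set G : ℂ → ℂ := fun lam => hq φ (A lam) with hG_def
  have hGeq : ∀ lam : ℂ, G lam = (1 - φ (A lam) 0) / (1 - lam) := by
    intro lam
    rw [hG_def]
    simp only [hq, hAcoord]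
  have hAdiff : Differentiable ℂ A := by
    rw [hA_def]
    exact (((differentiable_id).sub_const (z 0)).smul_const
      (e1 : EuclideanSpace ℂ (Fin (n + 1)))).const_add z
  have hden_ne : ∀ lam ∈ ball (z 0) R, (1:ℂ) - lam ≠ 0 := by
    intro lam hlam
    rw [mem_ball, Complex.dist_eq] at hlam
    intro h
    have h1 : lam = 1 := by
      have := sub_eq_zero.mp h
      exact this.symm
    rw [h1] at hlam
    have h2 : Complex.abs (1 - z 0) < R := by
      have : (1:ℂ) - z 0 = -(z 0 - 1) := by ring
      rw [this, norm_neg] at hlam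
      rw [this, map_neg_eq_map]
      exact hlam
    have h3 : R ≤ (1/3) * Complex.abs (1 - z 0) := by
      rw [hR_def, hδ0_def]
      apply mul_le_mul_of_nonneg_right _ (Complex.abs.nonneg _)
      rw [div_le_div_iff₀ (by positivity) (by norm_num)]
      linarith
    linarith [habs0]
  have hGdiffAt : ∀ lam ∈ ball (z 0) R, DifferentiableAt ℂ G lam := by
    intro lam hlam
    have hAball : A lam ∈ ball (0 : EuclideanSpace ℂ (Fin (n + 1))) 1 :=
      (hmem lam hlam).1.1
    have hnum : DifferentiableAt ℂ (fun l => (1:ℂ) - φ (A l) 0) lam := by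
      apply DifferentiableAt.const_sub
      exact (coord_diffAt hφhol hAball).comp lam (hAdiff lam)
    have hdenD : DifferentiableAt ℂ (fun l => (1:ℂ) - l) lam :=
      (differentiable_id.const_sub 1).differentiableAt
    have := hnum.div hdenD (hden_ne lam hlam)
    have hGeq' : G = fun l => (1 - φ (A l) 0) / (1 - l) := funext hGeq
    rw [hGeq']
    exact this
  have hGdiffOn : DifferentiableOn ℂ G (ball (z 0) R) :=
    fun lam hlam => (hGdiffAt lam hlam).differentiableWithinAt
  -- bounds on G
  have hhz : Complex.abs (hq φ z - (L:ℂ)) < ε' := by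
    have := hρ₂p hzK (lt_of_lt_of_le hzclose (min_le_right _ _))
    rwa [Complex.dist_eq] at this
  have hGbound : ∀ lam ∈ ball (z 0) R, Complex.abs (G lam - hq φ z) < 3 * ε' := by
    intro lam hlam
    have h1 : dist (A lam) (e1 : EuclideanSpace ℂ (Fin (n + 1))) < ρ₁ := by
      have h2 := (hmem lam hlam).2
      have h3 : dist z (e1 : EuclideanSpace ℂ (Fin (n + 1))) < ρ₁ / 2 :=
        lt_of_lt_of_le hzclose (min_le_left _ _)
      linarith
    have h4 := hρ₁p (hmem lam hlam).1 h1
    rw [Complex.dist_eq] at h4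
    calc Complex.abs (G lam - hq φ z)
        ≤ Complex.abs (G lam - (L:ℂ)) + Complex.abs ((L:ℂ) - hq φ z) :=
          Complex.abs.sub_le _ _ _
      _ < ε' + ε' := by
          apply add_lt_add h4
          rw [← map_neg_eq_map]
          simpa [neg_sub] using hhz
      _ < 3 * ε' := by linarith
  -- Schwarz estimate
  have hSch : ‖deriv G (z 0)‖ ≤ 3 * ε' / R := by
    have hint : deriv (fun lam => G lam - hq φ z) (z 0) = deriv G (z 0) :=
      deriv_sub_const _
    rw [← hint]
    have hd2 : DifferentiableOn ℂ (fun lam => G lam - hq φ z) (ball (z 0) R) :=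
      hGdiffOn.sub_const _
    have hc0 : (fun lam => G lam - hq φ z) (z 0) = 0 := by
      simp [hG_def, hA0]
    have hmaps : Set.MapsTo (fun lam => G lam - hq φ z) (ball (z 0) R)
        (ball ((fun lam => G lam - hq φ z) (z 0)) (3 * ε')) := by
      intro lam hlam
      rw [hc0, mem_ball, Complex.dist_eq, sub_zero]
      exact hGbound lam hlam
    exact Complex.norm_deriv_le_div_of_mapsTo_ball hd2 (hmaps.mono_right ball_subset_closedBall) hR
  -- derivative identity
  have hd1 : DifferentiableAt ℂ (fun x => (φ x 0 : ℂ)) z := coord_diffAt hφhol hzb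
  have hA' : HasDerivAt A (e1 : EuclideanSpace ℂ (Fin (n + 1))) (z 0) := by
    rw [hA_def]
    have h1 : HasDerivAt (fun lam : ℂ => lam - z 0) 1 (z 0) :=
      (hasDerivAt_id (z 0)).sub_const (z 0)
    have h2 := (h1.smul_const (e1 : EuclideanSpace ℂ (Fin (n + 1)))).const_add z
    simpa using h2
  have hFder : HasDerivAt (fun lam => (φ (A lam) 0 : ℂ))
      (fderiv ℂ (fun x => (φ x 0 : ℂ)) z (e1 : EuclideanSpace ℂ (Fin (n + 1)))) (z 0) := by
    have := hd1.hasFDerivAt.comp_hasDerivAt_of_eq (z 0) hA' hA0.symm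
    exact this
  have hGat : DifferentiableAt ℂ G (z 0) := hGdiffAt (z 0) (mem_ball_self hR)
  have hGder : HasDerivAt G (deriv G (z 0)) (z 0) := hGat.hasDerivAt
  have hprod : HasDerivAt (fun lam => (1 : ℂ) - (1 - lam) * G lam)
      (G (z 0) - (1 - z 0) * deriv G (z 0)) (z 0) := by
    have h1 : HasDerivAt (fun lam : ℂ => (1:ℂ) - lam) (-1) (z 0) := by
      simpa using (hasDerivAt_id (z 0)).const_sub 1
    have h2 := h1.mul hGder
    have h3 := h2.const_sub 1
    rw [show G (z 0) - (1 - z 0) * deriv G (z 0) = -(-1 * G (z 0) + (1 - z 0) * deriv G (z 0)) by ring]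
    exact h3
  have heq : (fun lam => (φ (A lam) 0 : ℂ)) =ᶠ[𝓝 (z 0)] (fun lam => 1 - (1 - lam) * G lam) := by
    have hball : ball (z 0) R ∈ 𝓝 (z 0) := isOpen_ball.mem_nhds (mem_ball_self hR)
    filter_upwards [hball] with lam hlam
    rw [hGeq lam, mul_div_assoc']
    rw [mul_comm, mul_div_assoc, div_self (hden_ne lam hlam), mul_one]
    ring
  have hFder2 : HasDerivAt (fun lam => (φ (A lam) 0 : ℂ))
      (G (z 0) - (1 - z 0) * deriv G (z 0)) (z 0) :=
    hprod.congr_of_eventuallyEq heq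
  have huniq : fderiv ℂ (fun x => (φ x 0 : ℂ)) z (e1 : EuclideanSpace ℂ (Fin (n + 1)))
      = G (z 0) - (1 - z 0) * deriv G (z 0) := hFder.unique hFder2
  -- final bound
  rw [Complex.dist_eq, huniq]
  have hGz0 : G (z 0) = hq φ z := by
    show hq φ (A (z 0)) = hq φ z
    rw [hA0]
  have hterm2 : Complex.abs ((1 - z 0) * deriv G (z 0)) ≤ 3 * ε' / δ0 := by
    rw [map_mul]
    have h5 : Complex.abs (deriv G (z 0)) ≤ 3 * ε' / R := hSch
    calc Complex.abs (1 - z 0) * Complex.abs (deriv G (z 0))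
        ≤ Complex.abs (1 - z 0) * (3 * ε' / R) :=
          mul_le_mul_of_nonneg_left h5 (Complex.abs.nonneg _)
      _ = 3 * ε' / δ0 := by
          rw [hR_def]
          field_simp
  calc Complex.abs (G (z 0) - (1 - z 0) * deriv G (z 0) - (L:ℂ))
      ≤ Complex.abs (G (z 0) - (L:ℂ)) + Complex.abs ((1 - z 0) * deriv G (z 0)) := by
        have h6 : G (z 0) - (1 - z 0) * deriv G (z 0) - (L:ℂ)
            = (G (z 0) - (L:ℂ)) - (1 - z 0) * deriv G (z 0) := by ring
        rw [h6]
        exact abs_sub_le_abs_add_abs _ _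
    _ < ε' + 3 * ε' / δ0 := by
        apply add_lt_add_of_lt_of_le
        · rw [hGz0]; exact hhz
        · exact hterm2
    _ ≤ δ / 2 := by
        have h7 : 3 * ε' / δ0 = 9 * (α + 1) * ε' := by
          rw [hδ0_def]
          field_simp
          ring
        have h8 : ε' + 9 * (α + 1) * ε' = δ / 2 := by
          rw [hε'_def, hC_def]
          field_simp
        rw [h7, h8]
    _ < δ := by linarith

end GoodSeq

end Main

end JC

/-- If `φ ∈ S(n,m)` satisfies condition (C) at `e₁` with
`L = liminf_{z→e₁}(1-‖φ(z)‖²)/(1-‖z‖²) < ∞` and `φ` has K-limit `e₁` at `e₁` (after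
rotations), then the directional derivative `D₁φ₁(z)` of the first component of `φ`
in the `e₁` direction has K-limit `L` at `e₁`. -/
theorem schur_agler_D1phi1_K_limit
    (n m : ℕ)
    (φ : EuclideanSpace ℂ (Fin (n + 1)) → EuclideanSpace ℂ (Fin (m + 1)))
    (hφmap : ∀ z ∈ ball (0 : EuclideanSpace ℂ (Fin (n + 1))) 1,
      φ z ∈ ball (0 : EuclideanSpace ℂ (Fin (m + 1))) 1)
    (hφhol : DifferentiableOn ℂ φ (ball (0 : EuclideanSpace ℂ (Fin (n + 1))) 1))
    (hpsd : SchurAglerKernelPos φ)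
    (L : ℝ)
    (hfin : ∃ C : ℝ, ∃ᶠ z in
      𝓝[ball (0 : EuclideanSpace ℂ (Fin (n + 1))) 1]
        (EuclideanSpace.single (0 : Fin (n + 1)) (1 : ℂ)),
      (1 - ‖φ z‖ ^ 2) / (1 - ‖z‖ ^ 2) ≤ C)
    (hL : Filter.liminf (fun z => (1 - ‖φ z‖ ^ 2) / (1 - ‖z‖ ^ 2))
      (𝓝[ball (0 : EuclideanSpace ℂ (Fin (n + 1))) 1]
        (EuclideanSpace.single (0 : Fin (n + 1)) (1 : ℂ))) = L)
    (hKlim : HasKLimit φ (EuclideanSpace.single (0 : Fin (n + 1)) (1 : ℂ))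
      (EuclideanSpace.single (0 : Fin (m + 1)) (1 : ℂ))) :
    HasKLimit
      (fun z => fderiv ℂ (fun w => (φ w 0 : ℂ)) z
        (EuclideanSpace.single (0 : Fin (n + 1)) (1 : ℂ)))
      (EuclideanSpace.single (0 : Fin (n + 1)) (1 : ℂ)) (L : ℂ) := by
  intro α hα
  have hKlim' : HasKLimit φ (JC.e1 : EuclideanSpace ℂ (Fin (n + 1)))
      (JC.e1 : EuclideanSpace ℂ (Fin (m + 1))) := hKlim
  have hL' : Filter.liminf (JC.fq φ)
      (𝓝[ball (0 : EuclideanSpace ℂ (Fin (n + 1))) 1]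
        (JC.e1 : EuclideanSpace ℂ (Fin (n + 1)))) = L := hL
  have hfin' : ∃ C : ℝ, ∃ᶠ z in
      𝓝[ball (0 : EuclideanSpace ℂ (Fin (n + 1))) 1]
        (JC.e1 : EuclideanSpace ℂ (Fin (n + 1))), JC.fq φ z ≤ C := hfin
  have hrad : Tendsto (fun t => φ (JC.rad t)) (𝓝[Set.Iio (1:ℝ)] 1)
      (𝓝 (JC.e1 : EuclideanSpace ℂ (Fin (m + 1)))) :=
    (hKlim' 3 (by norm_num)).comp JC.tendsto_rad_koranyi
  obtain ⟨hL0, v, hv1, hv2, hv3, hv4⟩ := JC.exists_good_seq hφmap hpsd hfin' hL' hrad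
  have hjulia : ∀ z ∈ ball (0 : EuclideanSpace ℂ (Fin (n + 1))) 1,
      Complex.abs (JC.hq φ z) ^ 2 ≤ L * JC.fq φ z := fun z hz =>
    JC.julia_ineq hpsd hv2 hv4 hv1 hv3 hz
  have hlow : ∀ ε : ℝ, 0 < ε → ∀ᶠ z in
      𝓝[ball (0 : EuclideanSpace ℂ (Fin (n + 1))) 1]
        (JC.e1 : EuclideanSpace ℂ (Fin (n + 1))), L - ε < JC.fq φ z := fun ε hε =>
    JC.eventually_lower (fun z hz => JC.fq_nonneg hz (hφmap z hz)) hL' hε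
  obtain ⟨hhrad, hfrad⟩ := JC.radial_tendsto hφmap hjulia hL0 hlow
  have hhk : ∀ β : ℝ, 0 < β → Tendsto (JC.hq φ)
      (𝓝[Koranyi β (JC.e1 : EuclideanSpace ℂ (Fin (n + 1)))] JC.e1) (𝓝 (L:ℂ)) :=
    fun β hβ => JC.hq_klimit hφmap hpsd hv1 hv2 hv3 hv4 hjulia hL0 hKlim' hhrad hfrad hβ
  exact JC.deriv_klimit hφmap hφhol hhk hα
end

section
/- For a holomorphic map φ: B^n → B^m in the Schur-Agler class, if every f ∈ H(φ) has a finite K-limit at ζ ∈ ∂B^n, then condition (C) holds: liminf_{z→ζ}(1-|φ(z)|^2)/(1-|z|^2) < ∞. -/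
open Metric Filter Topology
open scoped ComplexConjugate ComplexOrder

local notation "⟪" x ", " y "⟫" => @inner ℂ _ _ x y

/-- For a holomorphic Schur–Agler map `φ : Bⁿ → Bᵐ`, if every
`f ∈ H(φ)` has a finite K-limit at `ζ ∈ ∂Bⁿ`, then condition (C) holds:
`liminf_{z→ζ}(1-‖φ(z)‖²)/(1-‖z‖²) < ∞` (i.e. the ratio is frequently bounded
near `ζ` within the ball). -/
theorem schur_agler_K_limits_imply_conditionC
    (n m : ℕ)
    (φ : EuclideanSpace ℂ (Fin n) → EuclideanSpace ℂ (Fin m))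
    (hφmap : ∀ z ∈ ball (0 : EuclideanSpace ℂ (Fin n)) 1,
      φ z ∈ ball (0 : EuclideanSpace ℂ (Fin m)) 1)
    (hφhol : DifferentiableOn ℂ φ (ball (0 : EuclideanSpace ℂ (Fin n)) 1))
    (hpsd : SchurAglerKernelPos φ)
    (ζ : EuclideanSpace ℂ (Fin n)) (hζ : ‖ζ‖ = 1)
    (Hφ : Type*) [NormedAddCommGroup Hφ] [InnerProductSpace ℂ Hφ] [CompleteSpace Hφ]
    (toFunφ : Hφ →ₗ[ℂ] (EuclideanSpace ℂ (Fin n) → ℂ))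
    (hinjφ : Function.Injective toFunφ)
    (Kφ : EuclideanSpace ℂ (Fin n) → Hφ)
    (hreproφ : ∀ (f : Hφ) (z : EuclideanSpace ℂ (Fin n)),
      z ∈ ball (0 : EuclideanSpace ℂ (Fin n)) 1 → toFunφ f z = ⟪Kφ z, f⟫)
    (hkerφ : ∀ z w : EuclideanSpace ℂ (Fin n),
      z ∈ ball (0 : EuclideanSpace ℂ (Fin n)) 1 →
      w ∈ ball (0 : EuclideanSpace ℂ (Fin n)) 1 →
      toFunφ (Kφ w) z = (1 - ⟪φ w, φ z⟫) / (1 - ⟪w, z⟫))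
    (hdense : Dense (Submodule.span ℂ (Kφ '' (ball (0 : EuclideanSpace ℂ (Fin n)) 1)) : Set Hφ))
    (hKlims : ∀ f : Hφ, ∃ Lf : ℂ, ∀ α > (0 : ℝ),
      Tendsto (fun z => toFunφ f z) (𝓝[Koranyi α ζ] ζ) (𝓝 Lf)) :
    ∃ C : ℝ, ∃ᶠ z in 𝓝[ball (0 : EuclideanSpace ℂ (Fin n)) 1] ζ,
      (1 - ‖φ z‖ ^ 2) / (1 - ‖z‖ ^ 2) ≤ C := by
  classical
  -- radial sequence
  set r : ℕ → ℝ := fun k => 1 - ((k : ℝ) + 2)⁻¹ with hr_def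
  have hk2 : ∀ k : ℕ, (0 : ℝ) < (k : ℝ) + 2 := fun k => by positivity
  have hr0 : ∀ k, 0 < r k := by
    intro k
    have h1 : ((k : ℝ) + 2)⁻¹ ≤ 2⁻¹ := by
      apply inv_anti₀ (by norm_num)
      have : (0:ℝ) ≤ (k:ℝ) := Nat.cast_nonneg k
      linarith
    simp only [hr_def]
    norm_num at h1 ⊢
    linarith
  have hr1 : ∀ k, r k < 1 := by
    intro k
    have : (0:ℝ) < ((k : ℝ) + 2)⁻¹ := inv_pos.mpr (hk2 k)
    simp only [hr_def]; linarith
  set z : ℕ → EuclideanSpace ℂ (Fin n) := fun k => ((r k : ℂ)) • ζ with hz_def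
  have hnormz : ∀ k, ‖z k‖ = r k := by
    intro k
    simp only [hz_def, norm_smul, Complex.norm_real, Real.norm_eq_abs, hζ, mul_one,
      abs_of_pos (hr0 k)]
  have hz_ball : ∀ k, z k ∈ ball (0 : EuclideanSpace ℂ (Fin n)) 1 := by
    intro k
    rw [mem_ball_zero_iff, hnormz k]
    exact hr1 k
  have hζζ : ⟪ζ, ζ⟫ = 1 := by
    rw [inner_self_eq_norm_sq_to_K, hζ]; norm_num
  have hinnζz : ∀ k, ⟪ζ, z k⟫ = (r k : ℂ) := by
    intro k
    simp only [hz_def, inner_smul_right, hζζ, mul_one]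
  -- Koranyi membership
  have hKor : ∀ k, z k ∈ Koranyi 2 ζ := by
    intro k
    refine ⟨hz_ball k, ?_⟩
    rw [hinnζz k]
    have h1 : (1 : ℂ) - (r k : ℂ) = ((1 - r k : ℝ) : ℂ) := by push_cast; ring
    rw [h1, Complex.norm_real, Real.norm_eq_abs, abs_of_nonneg (by linarith [hr1 k])]
    rw [hnormz k]
    have h2 : (2:ℝ) / 2 * (1 - r k ^ 2) = (1 - r k) * (1 + r k) := by ring
    rw [h2]
    nlinarith [hr0 k, hr1 k]
  -- z k → ζ
  have hrt : Tendsto r atTop (𝓝 1) := by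
    have h0 : Tendsto (fun k : ℕ => ((k : ℝ) + 2)⁻¹) atTop (𝓝 0) := by
      apply tendsto_inv_atTop_zero.comp
      exact tendsto_atTop_add_const_right _ 2 tendsto_natCast_atTop_atTop
    have := h0.const_sub 1
    simpa using this
  have hzt : Tendsto z atTop (𝓝 ζ) := by
    have h1 : Tendsto (fun k => ((r k : ℂ))) atTop (𝓝 (1 : ℂ)) := by
      have := (Complex.continuous_ofReal.tendsto 1).comp hrt
      simpa [Function.comp_def] using this
    have h2 := h1.smul_const ζ
    simpa [hz_def] using h2
  have hztK : Tendsto z atTop (𝓝[Koranyi 2 ζ] ζ) :=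
    tendsto_nhdsWithin_of_tendsto_nhds_of_eventually_within z hzt
      (Eventually.of_forall hKor)
  have hztB : Tendsto z atTop (𝓝[ball (0 : EuclideanSpace ℂ (Fin n)) 1] ζ) :=
    tendsto_nhdsWithin_of_tendsto_nhds_of_eventually_within z hzt
      (Eventually.of_forall hz_ball)
  -- Banach–Steinhaus for the family innerSL ℂ (Kφ (z k))
  have hptwise : ∀ f : Hφ, ∃ C : ℝ, ∀ k : ℕ, ‖(innerSL ℂ (Kφ (z k))) f‖ ≤ C := by
    intro f
    obtain ⟨Lf, hLf⟩ := hKlims f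
    have h2 := (hLf 2 (by norm_num)).comp hztK
    have h3 : Tendsto (fun k => ‖toFunφ f (z k)‖) atTop (𝓝 ‖Lf‖) := h2.norm
    obtain ⟨C, hC⟩ := h3.bddAbove_range
    refine ⟨C, fun k => ?_⟩
    have h4 : (innerSL ℂ (Kφ (z k))) f = toFunφ f (z k) := by
      rw [hreproφ f (z k) (hz_ball k), innerSL_apply_apply]
    rw [h4]
    exact hC ⟨k, rfl⟩
  obtain ⟨C', hC'⟩ := banach_steinhaus hptwise
  have hKnorm : ∀ k, ‖Kφ (z k)‖ ≤ C' := by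
    intro k
    have := hC' k
    rwa [innerSL_apply_norm] at this
  -- identify the ratio with ‖Kφ (z k)‖²
  have hratio : ∀ k, (1 - ‖φ (z k)‖ ^ 2) / (1 - ‖z k‖ ^ 2) = ‖Kφ (z k)‖ ^ 2 := by
    intro k
    have h1 : ⟪Kφ (z k), Kφ (z k)⟫ = (1 - ⟪φ (z k), φ (z k)⟫) / (1 - ⟪z k, z k⟫) := by
      rw [← hreproφ (Kφ (z k)) (z k) (hz_ball k)]
      exact hkerφ (z k) (z k) (hz_ball k) (hz_ball k)
    have hφz : ⟪φ (z k), φ (z k)⟫ = ((‖φ (z k)‖ ^ 2 : ℝ) : ℂ) := by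
      rw [inner_self_eq_norm_sq_to_K]; norm_cast
    have hzz : ⟪z k, z k⟫ = ((‖z k‖ ^ 2 : ℝ) : ℂ) := by
      rw [inner_self_eq_norm_sq_to_K]; norm_cast
    have hKK : ⟪Kφ (z k), Kφ (z k)⟫ = ((‖Kφ (z k)‖ ^ 2 : ℝ) : ℂ) := by
      rw [inner_self_eq_norm_sq_to_K]; norm_cast
    rw [hKK, hφz, hzz] at h1
    have h2 : ((‖Kφ (z k)‖ ^ 2 : ℝ) : ℂ) =
        (((1 - ‖φ (z k)‖ ^ 2) / (1 - ‖z k‖ ^ 2) : ℝ) : ℂ) := by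
      rw [h1]; push_cast; ring
    exact (Complex.ofReal_injective h2).symm
  -- conclude
  refine ⟨C' ^ 2, ?_⟩
  apply hztB.frequently
  apply Frequently.of_forall
  intro k
  rw [hratio k]
  have h0 : (0 : ℝ) ≤ ‖Kφ (z k)‖ := norm_nonneg _
  nlinarith [hKnorm k]
end

section
/- Let φ(z) = z_1 as a map B^n → 𝔻 (n ≥ 2). Then φ belongs to the Schur-Agler class S(n,1), satisfies condition (C) at e_1 with L = 1, but the function (1-|φ(z)|^2)/(1-|z|^2) = (1-|z_1|^2)/(1-|z|^2) does not have a K-limit at e_1: there exist sequences in a Koranyi region D_α(e_1) converging to e_1 along which it converges to different limits. -/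
open Metric Filter Topology
open scoped ComplexConjugate ComplexOrder

local notation "⟪" x ", " y "⟫" => @inner ℂ _ _ x y

lemma gram_nonneg {ι κ : Type*} [Fintype ι] [Fintype κ] (c : ι → ℂ) (g : ι → κ → ℂ) :
    0 ≤ ∑ i, ∑ j, c i * conj (c j) * ∑ k, g i k * conj (g j k) := by
  have key : ∑ i, ∑ j, c i * conj (c j) * ∑ k, g i k * conj (g j k)
      = ∑ k, ((Complex.normSq (∑ i, c i * g i k) : ℝ) : ℂ) :=
    calc ∑ i, ∑ j, c i * conj (c j) * ∑ k, g i k * conj (g j k)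
        = ∑ i, ∑ j, ∑ k, c i * conj (c j) * (g i k * conj (g j k)) := by
          simp [Finset.mul_sum]
      _ = ∑ i, ∑ k, ∑ j, c i * conj (c j) * (g i k * conj (g j k)) :=
          Finset.sum_congr rfl fun i _ => Finset.sum_comm
      _ = ∑ k, ∑ i, ∑ j, c i * conj (c j) * (g i k * conj (g j k)) := Finset.sum_comm
      _ = ∑ k, ((Complex.normSq (∑ i, c i * g i k) : ℝ) : ℂ) := by
          refine Finset.sum_congr rfl fun k _ => ?_
          rw [← Complex.mul_conj, map_sum, Finset.sum_mul_sum]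
          refine Finset.sum_congr rfl fun i _ => Finset.sum_congr rfl fun j _ => ?_
          simp only [map_mul]
          ring
  rw [key]
  exact Finset.sum_nonneg fun k _ =>
    Complex.zero_le_real.mpr (Complex.normSq_nonneg _)

set_option maxHeartbeats 1000000 in
lemma part1 (n N : ℕ) (zs : Fin N → EuclideanSpace ℂ (Fin (n + 2)))
    (hz : ∀ i, zs i ∈ ball (0 : EuclideanSpace ℂ (Fin (n + 2))) 1) (c : Fin N → ℂ) :
    0 ≤ ∑ i, ∑ j, c i * conj (c j) *
      ((1 - (zs i 0 : ℂ) * conj (zs j 0 : ℂ)) / (1 - ⟪zs j, zs i⟫)) := by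
  have hnorm : ∀ i, ‖zs i‖ < 1 := fun i => mem_ball_zero_iff.mp (hz i)
  set s : Fin N → Fin N → ℂ := fun i j => ⟪zs j, zs i⟫ with hs_def
  set t : Fin N → Fin N → ℂ := fun i j => s i j - zs i 0 * conj (zs j 0) with ht_def
  have hs : ∀ i j, ‖s i j‖ < 1 := by
    intro i j
    calc ‖s i j‖ ≤ ‖zs j‖ * ‖zs i‖ := norm_inner_le_norm _ _
      _ < 1 := by nlinarith [hnorm i, hnorm j, norm_nonneg (zs i), norm_nonneg (zs j)]
  have hsne : ∀ i j, (1 : ℂ) - s i j ≠ 0 := by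
    intro i j h
    have h2 : s i j = 1 := by linear_combination -h
    have h3 := hs i j
    rw [h2] at h3
    simp at h3
  have hterm : ∀ i j, (1 - (zs i 0 : ℂ) * conj (zs j 0 : ℂ)) / (1 - s i j)
      = 1 + ∑' m : ℕ, t i j * s i j ^ m := by
    intro i j
    have inv1 := mul_inv_cancel₀ (hsne i j)
    rw [tsum_mul_left, tsum_geometric_of_norm_lt_one (hs i j), ht_def]
    rw [div_eq_mul_inv]
    linear_combination inv1
  have hsummable : ∀ i j, Summable (fun m : ℕ => c i * conj (c j) * (t i j * s i j ^ m)) :=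
    fun i j => (((summable_geometric_of_norm_lt_one (hs i j)).mul_left (t i j)).mul_left _)
  have key : ∀ i j, c i * conj (c j) *
      ((1 - (zs i 0 : ℂ) * conj (zs j 0 : ℂ)) / (1 - s i j))
      = c i * conj (c j) + ∑' m : ℕ, c i * conj (c j) * (t i j * s i j ^ m) := by
    intro i j
    rw [hterm i j, mul_add, mul_one, tsum_mul_left]
    conv_rhs => rw [tsum_mul_left, tsum_mul_left]
  have Fnonneg : ∀ m : ℕ, (0:ℂ) ≤ ∑ i, ∑ j, c i * conj (c j) * (t i j * s i j ^ m) := by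
    intro m
    have expand : ∀ i j, t i j * s i j ^ m
        = ∑ p : Fin (n + 1) × (Fin m → Fin (n + 2)),
            (zs i p.1.succ * ∏ l, zs i (p.2 l)) *
              conj (zs j p.1.succ * ∏ l, zs j (p.2 l)) := by
      intro i j
      have hsum : s i j = ∑ k, conj (zs j k) * zs i k := by
        simp only [hs_def, PiLp.inner_apply, RCLike.inner_apply']
      have ht2 : t i j = ∑ k : Fin (n + 1), conj (zs j k.succ) * zs i k.succ := by
        rw [ht_def]; dsimp only
        rw [hsum, Fin.sum_univ_succ]
        ring
      rw [ht2, hsum, Fintype.sum_pow, Finset.sum_mul_sum, ← Finset.sum_product']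
      refine Finset.sum_congr rfl fun p _ => ?_
      rw [Finset.prod_mul_distrib]
      simp only [map_mul, map_prod]
      ring
    have := gram_nonneg (κ := Fin (n + 1) × (Fin m → Fin (n + 2))) c
      (fun i p => zs i p.1.succ * ∏ l, zs i (p.2 l))
    refine le_of_le_of_eq this ?_
    exact Finset.sum_congr rfl fun i _ => Finset.sum_congr rfl fun j _ => by
      rw [← expand i j]
  have main : ∑ i, ∑ j, c i * conj (c j) *
      ((1 - (zs i 0 : ℂ) * conj (zs j 0 : ℂ)) / (1 - s i j))
      = (∑ i, c i) * conj (∑ i, c i)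
        + ∑' m : ℕ, ∑ i, ∑ j, c i * conj (c j) * (t i j * s i j ^ m) :=
    calc ∑ i, ∑ j, c i * conj (c j) *
          ((1 - (zs i 0 : ℂ) * conj (zs j 0 : ℂ)) / (1 - s i j))
        = ∑ i, ∑ j, (c i * conj (c j) + ∑' m : ℕ, c i * conj (c j) * (t i j * s i j ^ m)) :=
          Finset.sum_congr rfl fun i _ => Finset.sum_congr rfl fun j _ => key i j
      _ = (∑ i, ∑ j, c i * conj (c j))
          + ∑ i, ∑ j, ∑' m : ℕ, c i * conj (c j) * (t i j * s i j ^ m) := by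
          simp [Finset.sum_add_distrib]
      _ = (∑ i, c i) * conj (∑ i, c i)
          + ∑' m : ℕ, ∑ i, ∑ j, c i * conj (c j) * (t i j * s i j ^ m) := by
          congr 1
          · rw [map_sum, Finset.sum_mul_sum]
          · rw [Summable.tsum_finsetSum fun i _ => summable_sum fun j _ => hsummable i j]
            exact Finset.sum_congr rfl fun i _ =>
              (Summable.tsum_finsetSum fun j _ => hsummable i j).symm
  rw [main]
  refine add_nonneg ?_ (tsum_nonneg Fnonneg)
  rw [Complex.mul_conj]
  exact Complex.zero_le_real.mpr (Complex.normSq_nonneg _)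

section Aux
variable (n : ℕ)

lemma rj_pos (j : ℕ) : (0:ℝ) < 1 - ((j:ℝ)+2)⁻¹ := by
  have h1 : (0:ℝ) < (j:ℝ)+2 := by positivity
  have h2 : ((j:ℝ)+2)⁻¹ ≤ 2⁻¹ := by
    apply inv_anti₀ (by norm_num)
    have : (0:ℝ) ≤ (j:ℝ) := Nat.cast_nonneg j
    linarith
  norm_num at h2 ⊢
  linarith

lemma rj_lt_one (j : ℕ) : 1 - ((j:ℝ)+2)⁻¹ < 1 := by
  have h1 : (0:ℝ) < (j:ℝ)+2 := by positivity
  have := inv_pos.mpr h1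
  linarith

lemma inv_tendsto : Tendsto (fun j : ℕ => ((j:ℝ)+2)⁻¹) atTop (𝓝 0) := by
  have h : Tendsto (fun j : ℕ => ((j:ℝ)+2)) atTop atTop :=
    tendsto_atTop_add_const_right _ 2 tendsto_natCast_atTop_atTop
  exact h.inv_tendsto_atTop

lemma single_tendsto :
    Tendsto (fun j : ℕ => EuclideanSpace.single (0 : Fin (n+2)) ((1 - ((j:ℝ)+2)⁻¹ : ℝ) : ℂ))
      atTop (𝓝 (EuclideanSpace.single (0 : Fin (n+2)) (1 : ℂ))) := by
  apply tendsto_iff_norm_sub_tendsto_zero.mpr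
  have key : ∀ j : ℕ, ‖EuclideanSpace.single (0 : Fin (n+2)) ((1 - ((j:ℝ)+2)⁻¹ : ℝ) : ℂ)
      - EuclideanSpace.single (0 : Fin (n+2)) (1 : ℂ)‖ = ((j:ℝ)+2)⁻¹ := by
    intro j
    have heq : EuclideanSpace.single (0 : Fin (n+2)) ((1 - ((j:ℝ)+2)⁻¹ : ℝ) : ℂ)
        - EuclideanSpace.single (0 : Fin (n+2)) (1 : ℂ)
        = EuclideanSpace.single (0 : Fin (n+2)) ((-(((j:ℝ)+2)⁻¹) : ℝ) : ℂ) := by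
      ext k
      by_cases hk : k = 0 <;> simp [hk, EuclideanSpace.single_apply] <;> push_cast <;> ring
    rw [heq, EuclideanSpace.norm_single, Complex.norm_real, Real.norm_eq_abs, abs_neg,
      abs_of_pos (by positivity)]
  exact Tendsto.congr (fun j => (key j).symm) (inv_tendsto)


end Aux

lemma abs_apply_le_norm (n : ℕ) (z : EuclideanSpace ℂ (Fin (n+2))) :
    ‖z 0‖ ≤ ‖z‖ := by
  have h1 : (z 0 : ℂ) = ⟪EuclideanSpace.single (0 : Fin (n+2)) (1:ℂ), z⟫ := by
    rw [EuclideanSpace.inner_single_left]; simp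
  have he : ‖EuclideanSpace.single (0 : Fin (n+2)) (1:ℂ)‖ = 1 := by
    rw [EuclideanSpace.norm_single]; simp
  calc ‖z 0‖ = ‖(z 0 : ℂ)‖ := rfl
    _ = ‖⟪EuclideanSpace.single (0 : Fin (n+2)) (1:ℂ), z⟫‖ := by rw [← h1]
    _ ≤ ‖EuclideanSpace.single (0 : Fin (n+2)) (1:ℂ)‖ * ‖z‖ := norm_inner_le_norm _ _
    _ = ‖z‖ := by rw [he, one_mul]

lemma part2 (n : ℕ) :
    Filter.liminf
      (fun z : EuclideanSpace ℂ (Fin (n + 2)) =>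
        (1 - ‖z 0‖ ^ 2) / (1 - ‖z‖ ^ 2))
      (𝓝[ball (0 : EuclideanSpace ℂ (Fin (n + 2))) 1]
        (EuclideanSpace.single (0 : Fin (n + 2)) (1 : ℂ))) = 1 := by
  set E := EuclideanSpace ℂ (Fin (n+2))
  set e₁ : E := EuclideanSpace.single (0 : Fin (n+2)) (1 : ℂ) with he₁
  set f : E → ℝ := fun z => (1 - ‖z 0‖ ^ 2) / (1 - ‖z‖ ^ 2) with hf
  set l := 𝓝[ball (0 : E) 1] e₁ with hl
  have he : ‖e₁‖ = 1 := by rw [he₁, EuclideanSpace.norm_single]; simp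
  haveI : l.NeBot := by
    apply mem_closure_iff_nhdsWithin_neBot.mp
    rw [closure_ball (0:E) one_ne_zero]
    exact mem_closedBall_zero_iff.mpr he.le
  have hlow : ∀ z ∈ ball (0:E) 1, 1 ≤ f z := by
    intro z hz
    have h1 : ‖z‖ < 1 := mem_ball_zero_iff.mp hz
    have h2 := abs_apply_le_norm n z
    have h3 := norm_nonneg (z 0)
    have hd : 0 < 1 - ‖z‖^2 := by nlinarith [norm_nonneg z]
    rw [hf, le_div_iff₀ hd]
    nlinarith
  have hev : ∀ᶠ z in l, 1 ≤ f z := eventually_nhdsWithin_of_forall hlow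
  -- radial sequence
  set a : ℕ → E := fun k => EuclideanSpace.single (0 : Fin (n+2)) ((1 - ((k:ℝ)+2)⁻¹ : ℝ) : ℂ)
    with ha
  have hmem : ∀ k, a k ∈ ball (0:E) 1 := by
    intro k
    rw [mem_ball_zero_iff, ha]
    rw [EuclideanSpace.norm_single, Complex.norm_real, Real.norm_eq_abs,
      abs_of_pos (rj_pos k)]
    exact rj_lt_one k
  have hval : ∀ k, f (a k) = 1 := by
    intro k
    have h0 : a k 0 = ((1 - ((k:ℝ)+2)⁻¹ : ℝ) : ℂ) := by
      rw [ha]; simp [EuclideanSpace.single_apply]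
    have hn : ‖a k‖ = 1 - ((k:ℝ)+2)⁻¹ := by
      rw [ha, EuclideanSpace.norm_single, Complex.norm_real, Real.norm_eq_abs,
        abs_of_pos (rj_pos k)]
    have hr1 := rj_pos k
    have hr2 := rj_lt_one k
    rw [hf]
    simp only [h0, hn, Complex.norm_real, Real.norm_eq_abs, abs_of_pos hr1]
    apply div_self
    nlinarith
  have htend : Tendsto a atTop l := by
    rw [hl]
    exact tendsto_nhdsWithin_of_tendsto_nhds_of_eventually_within a (single_tendsto n)
      (Eventually.of_forall hmem)
  have hfreq : ∃ᶠ z in l, f z ≤ 1 :=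
    htend.frequently (Frequently.of_forall fun k => (hval k).le)
  exact le_antisymm
    (liminf_le_of_frequently_le hfreq (isBoundedUnder_of_eventually_ge hev))
    (le_liminf_of_le (IsCoboundedUnder.of_frequently_le hfreq) hev)

section P3
variable (n : ℕ)

noncomputable def rr (j : ℕ) : ℝ := 1 - ((j:ℝ)+2)⁻¹
noncomputable def tt (j : ℕ) : ℝ := Real.sqrt ((1 - rr j ^ 2) / 2)

lemma rr_mem (j : ℕ) : 0 < rr j ∧ rr j < 1 := ⟨rj_pos j, rj_lt_one j⟩

lemma tt_sq (j : ℕ) : tt j ^ 2 = (1 - rr j ^ 2) / 2 := by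
  have h := rr_mem j
  apply Real.sq_sqrt
  nlinarith [h.1, h.2]

lemma tt_nonneg (j : ℕ) : 0 ≤ tt j := Real.sqrt_nonneg _

noncomputable def uu (j : ℕ) : EuclideanSpace ℂ (Fin (n+2)) :=
  EuclideanSpace.single 0 ((rr j : ℝ) : ℂ)

noncomputable def vv (j : ℕ) : EuclideanSpace ℂ (Fin (n+2)) :=
  EuclideanSpace.single 0 ((rr j : ℝ) : ℂ) + EuclideanSpace.single 1 ((tt j : ℝ) : ℂ)

lemma uu_norm (j : ℕ) : ‖uu n j‖ = rr j := by
  rw [uu, EuclideanSpace.norm_single, Complex.norm_real, Real.norm_eq_abs,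
    abs_of_pos (rr_mem j).1]

lemma uu_apply (j : ℕ) : uu n j 0 = ((rr j : ℝ) : ℂ) := by
  rw [uu]; simp [EuclideanSpace.single_apply]

lemma fin01 : (0 : Fin (n+2)) ≠ 1 := by simp [Fin.ext_iff]

lemma vv_apply (j : ℕ) : vv n j 0 = ((rr j : ℝ) : ℂ) := by
  have h : vv n j 0 = EuclideanSpace.single (0 : Fin (n+2)) ((rr j : ℝ) : ℂ) 0
        + EuclideanSpace.single (1 : Fin (n+2)) ((tt j : ℝ) : ℂ) 0 := rfl
  rw [h]
  simp [EuclideanSpace.single_apply, fin01 n]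

lemma vv_norm_sq (j : ℕ) : ‖vv n j‖ ^ 2 = rr j ^ 2 + tt j ^ 2 := by
  rw [vv, norm_add_sq (𝕜 := ℂ)]
  rw [EuclideanSpace.inner_single_left]
  have h1 : EuclideanSpace.single (1 : Fin (n+2)) ((tt j : ℝ) : ℂ) 0 = 0 := by
    simp [EuclideanSpace.single_apply, fin01 n]
  rw [h1]
  simp only [mul_zero, map_zero, mul_zero, add_zero]
  rw [EuclideanSpace.norm_single, EuclideanSpace.norm_single,
    Complex.norm_real, Complex.norm_real, Real.norm_eq_abs, Real.norm_eq_abs,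
    abs_of_pos (rr_mem j).1, abs_of_nonneg (tt_nonneg j)]

end P3

lemma rr_def (j : ℕ) : rr j = 1 - ((j:ℝ)+2)⁻¹ := rfl

lemma uu_tendsto (n : ℕ) :
    Tendsto (uu n) atTop (𝓝 (EuclideanSpace.single (0 : Fin (n+2)) (1 : ℂ))) :=
  single_tendsto n

lemma rr_tendsto : Tendsto rr atTop (𝓝 1) := by
  have h := (tendsto_const_nhds (x := (1:ℝ)) (f := atTop (α := ℕ))).sub inv_tendsto
  rw [show rr = fun j : ℕ => 1 - ((j:ℝ)+2)⁻¹ from funext rr_def]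
  simpa using h

lemma tt_tendsto : Tendsto tt atTop (𝓝 0) := by
  have h : Tendsto (fun j => (1 - rr j ^ 2)/2) atTop (𝓝 ((1 - 1^2)/2)) :=
    (tendsto_const_nhds.sub (rr_tendsto.pow 2)).div_const 2
  have h2 := h.sqrt
  have h3 : Real.sqrt ((1 - 1^2)/2) = 0 := by norm_num
  rw [h3] at h2
  exact h2

lemma vv_sub_e₁ (n : ℕ) (j : ℕ) :
    vv n j - EuclideanSpace.single (0 : Fin (n+2)) (1 : ℂ)
      = EuclideanSpace.single (0 : Fin (n+2)) (((rr j - 1 : ℝ)) : ℂ)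
        + EuclideanSpace.single (1 : Fin (n+2)) (((tt j : ℝ)) : ℂ) := by
  ext k
  have h : (vv n j - EuclideanSpace.single (0 : Fin (n+2)) (1 : ℂ)) k
      = EuclideanSpace.single (0 : Fin (n+2)) ((rr j : ℝ) : ℂ) k
        + EuclideanSpace.single (1 : Fin (n+2)) ((tt j : ℝ) : ℂ) k
        - EuclideanSpace.single (0 : Fin (n+2)) (1 : ℂ) k := rfl
  have h2 : (EuclideanSpace.single (0 : Fin (n+2)) (((rr j - 1 : ℝ)) : ℂ)
        + EuclideanSpace.single (1 : Fin (n+2)) (((tt j : ℝ)) : ℂ)) k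
      = EuclideanSpace.single (0 : Fin (n+2)) (((rr j - 1 : ℝ)) : ℂ) k
        + EuclideanSpace.single (1 : Fin (n+2)) ((tt j : ℝ) : ℂ) k := rfl
  rw [h, h2]
  by_cases hk : k = 0
  · subst hk
    simp [EuclideanSpace.single_apply, fin01 n]
  · by_cases hk1 : k = 1
    · subst hk1
      simp [EuclideanSpace.single_apply, (fin01 n).symm]
    · simp [EuclideanSpace.single_apply, hk, hk1]

lemma vv_tendsto (n : ℕ) :
    Tendsto (vv n) atTop (𝓝 (EuclideanSpace.single (0 : Fin (n+2)) (1 : ℂ))) := by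
  apply tendsto_iff_norm_sub_tendsto_zero.mpr
  have hbound : ∀ j, ‖vv n j - EuclideanSpace.single (0 : Fin (n+2)) (1 : ℂ)‖
      ≤ ((j:ℝ)+2)⁻¹ + tt j := by
    intro j
    rw [vv_sub_e₁ n j]
    refine le_trans (norm_add_le _ _) ?_
    rw [EuclideanSpace.norm_single, EuclideanSpace.norm_single,
      Complex.norm_real, Complex.norm_real, Real.norm_eq_abs, Real.norm_eq_abs,
      abs_of_nonneg (tt_nonneg j)]
    have : |rr j - 1| = ((j:ℝ)+2)⁻¹ := by
      rw [abs_of_nonpos (by nlinarith [(rr_mem j).2]), rr_def]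
      ring
    rw [this]
  refine squeeze_zero (fun j => norm_nonneg _) hbound ?_
  have h := inv_tendsto.add tt_tendsto
  simpa using h

lemma part3 (n : ℕ) :
    ∃ α > (0 : ℝ), ∃ u v : ℕ → EuclideanSpace ℂ (Fin (n + 2)),
      (∀ j, u j ∈ Koranyi α (EuclideanSpace.single (0 : Fin (n + 2)) (1 : ℂ))) ∧
      (∀ j, v j ∈ Koranyi α (EuclideanSpace.single (0 : Fin (n + 2)) (1 : ℂ))) ∧
      Tendsto u atTop (𝓝 (EuclideanSpace.single (0 : Fin (n + 2)) (1 : ℂ))) ∧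
      Tendsto v atTop (𝓝 (EuclideanSpace.single (0 : Fin (n + 2)) (1 : ℂ))) ∧
      ∃ L₁ L₂ : ℝ, L₁ ≠ L₂ ∧
        Tendsto (fun j => (1 - ‖u j 0‖ ^ 2) / (1 - ‖u j‖ ^ 2))
          atTop (𝓝 L₁) ∧
        Tendsto (fun j => (1 - ‖v j 0‖ ^ 2) / (1 - ‖v j‖ ^ 2))
          atTop (𝓝 L₂) := by
  have hinner : ∀ z : EuclideanSpace ℂ (Fin (n+2)),
      ⟪EuclideanSpace.single (0 : Fin (n+2)) (1 : ℂ), z⟫ = z 0 := by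
    intro z; rw [EuclideanSpace.inner_single_left]; simp
  refine ⟨4, by norm_num, uu n, vv n, ?_, ?_, uu_tendsto n, vv_tendsto n, 1, 2, by norm_num,
    ?_, ?_⟩
  · intro j
    obtain ⟨hr0, hr1⟩ := rr_mem j
    constructor
    · rw [mem_ball_zero_iff, uu_norm]; exact hr1
    · rw [hinner, uu_apply, uu_norm]
      have habs : ‖1 - ((rr j : ℝ) : ℂ)‖ = 1 - rr j := by
        rw [show (1 : ℂ) - ((rr j : ℝ) : ℂ) = (((1 - rr j : ℝ)) : ℂ) by push_cast; ring,
          Complex.norm_real, Real.norm_eq_abs, abs_of_nonneg (by linarith)]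
      rw [habs]
      nlinarith
  · intro j
    obtain ⟨hr0, hr1⟩ := rr_mem j
    have hv2 := vv_norm_sq n j
    have ht2 := tt_sq j
    constructor
    · rw [mem_ball_zero_iff]
      nlinarith [norm_nonneg (vv n j)]
    · rw [hinner, vv_apply, vv_norm_sq]
      have habs : ‖1 - ((rr j : ℝ) : ℂ)‖ = 1 - rr j := by
        rw [show (1 : ℂ) - ((rr j : ℝ) : ℂ) = (((1 - rr j : ℝ)) : ℂ) by push_cast; ring,
          Complex.norm_real, Real.norm_eq_abs, abs_of_nonneg (by linarith)]
      rw [habs]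
      nlinarith
  · have hval : ∀ j, (1 - ‖uu n j 0‖ ^ 2) / (1 - ‖uu n j‖ ^ 2) = 1 := by
      intro j
      obtain ⟨hr0, hr1⟩ := rr_mem j
      rw [uu_apply, uu_norm, Complex.norm_real, Real.norm_eq_abs, abs_of_pos hr0]
      apply div_self
      nlinarith
    exact tendsto_const_nhds.congr fun j => (hval j).symm
  · have hval : ∀ j, (1 - ‖vv n j 0‖ ^ 2) / (1 - ‖vv n j‖ ^ 2) = 2 := by
      intro j
      obtain ⟨hr0, hr1⟩ := rr_mem j
      have hne : (1:ℝ) - rr j ^ 2 ≠ 0 := by nlinarith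
      rw [vv_apply, vv_norm_sq, tt_sq, Complex.norm_real, Real.norm_eq_abs, abs_of_pos hr0]
      rw [show (1:ℝ) - (rr j ^ 2 + (1 - rr j ^ 2)/2) = (1 - rr j ^ 2)/2 by ring]
      rw [div_div_eq_mul_div, mul_comm, mul_div_assoc, div_self hne, mul_one]
    exact tendsto_const_nhds.congr fun j => (hval j).symm

/-- For `φ(z) = z₁ : Bⁿ → 𝔻` (with `n ≥ 2`): `φ` is in the Schur–Agler
class `S(n,1)` (the kernel `(1 - z₁ conj w₁)/(1-⟨z,w⟩)` is positive semidefinite),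
satisfies condition (C) at `e₁` with `L = liminf = 1`, but
`(1-|z₁|²)/(1-‖z‖²)` has no K-limit at `e₁`: there exist two sequences in some
Koranyi region `D_α(e₁)` converging to `e₁` along which it converges to different
limits. -/
theorem coordinate_map_no_K_limit (n : ℕ) :
    (∀ (N : ℕ) (zs : Fin N → EuclideanSpace ℂ (Fin (n + 2))),
      (∀ i, zs i ∈ ball (0 : EuclideanSpace ℂ (Fin (n + 2))) 1) →
      ∀ c : Fin N → ℂ,
        0 ≤ ∑ i, ∑ j, c i * conj (c j) *
          ((1 - (zs i 0 : ℂ) * conj (zs j 0 : ℂ)) / (1 - ⟪zs j, zs i⟫))) ∧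
    (Filter.liminf
      (fun z : EuclideanSpace ℂ (Fin (n + 2)) =>
        (1 - ‖z 0‖ ^ 2) / (1 - ‖z‖ ^ 2))
      (𝓝[ball (0 : EuclideanSpace ℂ (Fin (n + 2))) 1]
        (EuclideanSpace.single (0 : Fin (n + 2)) (1 : ℂ))) = 1) ∧
    (∃ α > (0 : ℝ), ∃ u v : ℕ → EuclideanSpace ℂ (Fin (n + 2)),
      (∀ j, u j ∈ Koranyi α (EuclideanSpace.single (0 : Fin (n + 2)) (1 : ℂ))) ∧
      (∀ j, v j ∈ Koranyi α (EuclideanSpace.single (0 : Fin (n + 2)) (1 : ℂ))) ∧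
      Tendsto u atTop (𝓝 (EuclideanSpace.single (0 : Fin (n + 2)) (1 : ℂ))) ∧
      Tendsto v atTop (𝓝 (EuclideanSpace.single (0 : Fin (n + 2)) (1 : ℂ))) ∧
      ∃ L₁ L₂ : ℝ, L₁ ≠ L₂ ∧
        Tendsto (fun j => (1 - ‖u j 0‖ ^ 2) / (1 - ‖u j‖ ^ 2))
          atTop (𝓝 L₁) ∧
        Tendsto (fun j => (1 - ‖v j 0‖ ^ 2) / (1 - ‖v j‖ ^ 2))
          atTop (𝓝 L₂)) := by
  exact ⟨fun N zs hz c => part1 n N zs hz c, part2 n, part3 n⟩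
end
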